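/- arXiv:1310.2515 — 5 statements merged into one kernel-verified Lean document; each statement's English description precedes it below -/
import Mathlib

section
/- Let q ∈ (0,1) and θ > 0 satisfy q^θ ≤ 1/2, and let φ ∈ [π/4, π/2]. For s ≥ 0 put w(s) = q^θ + s e^{iφ} ∈ ℂ (so that 1 − q^k w(s) ≠ 0 for all k ≥ 0 when φ ∈ (0, π/2]). Then the function s ↦ G(s) := −f(θ) log|w(s)| + κ(θ) Re(w(s)) + Σ_{k=0}^∞ log|1 − q^k w(s)| is strictly increasing on [0,∞). (G(s) equals Re f₀ along the contour C_φ, where f₀(W) = −f(θ)(log q)W + κ(θ) q^W + log(q^W;q)_∞ and w = q^W; thus C_φ is steep descent for −Re f₀, which attains its maximum at θ, i.e. at s = 0.) -/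
open Real Set

noncomputable def auxF (a c t u2 : ℝ) (s : ℝ) : ℝ :=
  c / (1 - c*a)^2 * (a + s*t)
    - (c*a)^2 / (1 - c*a)^2 * (Real.log ((a + s*t)^2 + s^2*u2) / 2)
    + Real.log ((1 - c*a - c*s*t)^2 + c^2*s^2*u2) / 2

lemma auxF_hasDerivAt (a c t u2 : ℝ) (ha : 0 < a) (hc : 0 < c) (hb : c*a ≤ 1/2)
    (ht : 0 ≤ t) (hu : 0 < u2) (x : ℝ) (hx : 0 < x) :
    HasDerivAt (auxF a c t u2)
      (c / (1 - c*a)^2 * t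
        - (c*a)^2 / (1 - c*a)^2 * ((2*(a + x*t)*t + 2*x*u2) / ((a + x*t)^2 + x^2*u2) / 2)
        + (2*(1 - c*a - c*x*t)*(-(c*t)) + c^2*(2*x)*u2) / ((1 - c*a - c*x*t)^2 + c^2*x^2*u2) / 2) x := by
  have hAx : (0:ℝ) < (a + x*t)^2 + x^2*u2 := by nlinarith [mul_nonneg hx.le ht]
  have hBx : (0:ℝ) < (1 - c*a - c*x*t)^2 + c^2*x^2*u2 := by
    have : 0 < c^2*x^2*u2 := by positivity
    nlinarith [sq_nonneg (1 - c*a - c*x*t)]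
  have h1 : HasDerivAt (fun s:ℝ => a + s*t) t x := by
    simpa using ((hasDerivAt_id x).mul_const t).const_add a
  have h2 : HasDerivAt (fun s:ℝ => s^2*u2) (2*x*u2) x := by
    simpa [mul_comm] using (hasDerivAt_pow 2 x).mul_const u2
  have hA : HasDerivAt (fun s:ℝ => (a + s*t)^2 + s^2*u2) (2*(a + x*t)*t + 2*x*u2) x := by
    have h3 := (h1.pow 2).add h2
    refine h3.congr_deriv ?_
    push_cast
    ring
  have h4 : HasDerivAt (fun s:ℝ => 1 - c*a - c*s*t) (-(c*t)) x := by
    have := (((hasDerivAt_id x).const_mul c).mul_const t).const_sub (1 - c*a)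
    exact this.congr_deriv (by ring)
  have h5 : HasDerivAt (fun s:ℝ => c^2*s^2*u2) (c^2*(2*x)*u2) x := by
    have := ((hasDerivAt_pow 2 x).const_mul (c^2)).mul_const u2
    refine this.congr_deriv ?_
    push_cast
    ring
  have hB : HasDerivAt (fun s:ℝ => (1 - c*a - c*s*t)^2 + c^2*s^2*u2)
      (2*(1 - c*a - c*x*t)*(-(c*t)) + c^2*(2*x)*u2) x := by
    have h6 := (h4.pow 2).add h5
    refine h6.congr_deriv ?_
    push_cast
    ring
  have hgA := (hA.log hAx.ne').div_const 2
  have hgB := (hB.log hBx.ne').div_const 2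
  exact ((h1.const_mul (c / (1 - c*a)^2)).sub (hgA.const_mul ((c*a)^2 / (1 - c*a)^2))).add hgB

lemma auxF_deriv_key (a c t u2 : ℝ) (ha : 0 < a) (hc : 0 < c) (hb : c*a ≤ 1/2)
    (ht : 0 ≤ t) (ht2 : t^2 ≤ 1/2) (hu : 0 < u2) (htu : t^2 + u2 = 1) (x : ℝ) (hx : 0 < x) :
    (c / (1 - c*a)^2 * t
        - (c*a)^2 / (1 - c*a)^2 * ((2*(a + x*t)*t + 2*x*u2) / ((a + x*t)^2 + x^2*u2) / 2)
        + (2*(1 - c*a - c*x*t)*(-(c*t)) + c^2*(2*x)*u2) / ((1 - c*a - c*x*t)^2 + c^2*x^2*u2) / 2)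
      = (x^2*c^2*( a*t*(3 - 4*t^2)*(1 - a*c) + x*((1 - 2*t^2)*(1 - 2*(a*c))) + x^2*c*t ))
        / ((1 - c*a)^2 * ((a + x*t)^2 + x^2*u2) * ((1 - c*a - c*x*t)^2 + c^2*x^2*u2)) := by
  have hu2 : u2 = 1 - t^2 := by linarith
  subst hu2
  have hAx : (0:ℝ) < (a + x*t)^2 + x^2*(1 - t^2) := by nlinarith [mul_nonneg hx.le ht, sq_nonneg t]
  have hBx : (0:ℝ) < (1 - c*a - c*x*t)^2 + c^2*x^2*(1 - t^2) := by
    have h1 : 0 < c^2*x^2*(1 - t^2) := by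
      have : t^2 < 1 := by linarith
      positivity
    nlinarith [sq_nonneg (1 - c*a - c*x*t)]
  have hca : c*a < 1 := by linarith
  have hca' : (0:ℝ) < 1 - c*a := by linarith
  field_simp [hca'.ne', hAx.ne', hBx.ne']
  ring

lemma auxF_contOn (a c t u2 : ℝ) (ha : 0 < a) (hc : 0 < c) (hb : c*a ≤ 1/2)
    (ht : 0 ≤ t) (hu : 0 < u2) :
    ContinuousOn (auxF a c t u2) (Ici 0) := by
  have hA : ∀ s ∈ Ici (0:ℝ), (a + s*t)^2 + s^2*u2 ≠ 0 := by
    intro s hs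
    have hs0 : (0:ℝ) ≤ s := hs
    have : 0 < (a + s*t)^2 + s^2*u2 := by nlinarith [mul_nonneg hs0 ht, mul_nonneg (mul_nonneg hs0 hs0) hu.le]
    exact this.ne'
  have hB : ∀ s ∈ Ici (0:ℝ), (1 - c*a - c*s*t)^2 + c^2*s^2*u2 ≠ 0 := by
    intro s hs
    have hs0 : (0:ℝ) ≤ s := hs
    rcases eq_or_lt_of_le hs0 with h|h
    · have : (0:ℝ) < (1 - c*a - c*s*t)^2 + c^2*s^2*u2 := by
        rw [← h]; nlinarith
      exact this.ne'
    · have h2 : 0 < c^2*s^2*u2 := by positivity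
      have : (0:ℝ) < (1 - c*a - c*s*t)^2 + c^2*s^2*u2 := by nlinarith [sq_nonneg (1 - c*a - c*s*t)]
      exact this.ne'
  have cA : Continuous (fun s:ℝ => (a + s*t)^2 + s^2*u2) := by fun_prop
  have cB : Continuous (fun s:ℝ => (1 - c*a - c*s*t)^2 + c^2*s^2*u2) := by fun_prop
  have cLA : ContinuousOn (fun s:ℝ => Real.log ((a + s*t)^2 + s^2*u2)) (Ici 0) :=
    cA.continuousOn.log hA
  have cLB : ContinuousOn (fun s:ℝ => Real.log ((1 - c*a - c*s*t)^2 + c^2*s^2*u2)) (Ici 0) :=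
    cB.continuousOn.log hB
  have c1 : Continuous (fun s:ℝ => c / (1 - c*a)^2 * (a + s*t)) := by fun_prop
  exact (c1.continuousOn.sub (continuousOn_const.mul (cLA.div_const 2))).add (cLB.div_const 2)

lemma numer_nonneg (a c t x : ℝ) (ha : 0 < a) (hc : 0 < c) (hb : c*a ≤ 1/2)
    (ht : 0 ≤ t) (ht2 : t^2 ≤ 1/2) (hx : 0 < x) :
    0 ≤ x^2*c^2*( a*t*(3 - 4*t^2)*(1 - a*c) + x*((1 - 2*t^2)*(1 - 2*(a*c))) + x^2*c*t ) := by
  have h1 : 0 ≤ a*t*(3 - 4*t^2)*(1 - a*c) :=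
    mul_nonneg (mul_nonneg (mul_nonneg ha.le ht) (by nlinarith)) (by nlinarith)
  have h2 : 0 ≤ x*((1 - 2*t^2)*(1 - 2*(a*c))) :=
    mul_nonneg hx.le (mul_nonneg (by nlinarith) (by nlinarith))
  have h3 : 0 ≤ x^2*c*t := by positivity
  have h4 : 0 ≤ x^2*c^2 := by positivity
  nlinarith [mul_nonneg h4 (by linarith : (0:ℝ) ≤ a*t*(3 - 4*t^2)*(1 - a*c) + x*((1 - 2*t^2)*(1 - 2*(a*c))) + x^2*c*t)]

lemma numer_pos (a c t x : ℝ) (ha : 0 < a) (hc : 0 < c) (hb : c*a < 1/2)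
    (ht : 0 ≤ t) (ht2 : t^2 ≤ 1/2) (hx : 0 < x) :
    0 < x^2*c^2*( a*t*(3 - 4*t^2)*(1 - a*c) + x*((1 - 2*t^2)*(1 - 2*(a*c))) + x^2*c*t ) := by
  have hbr : 0 < a*t*(3 - 4*t^2)*(1 - a*c) + x*((1 - 2*t^2)*(1 - 2*(a*c))) + x^2*c*t := by
    rcases eq_or_lt_of_le ht with h|h
    · rw [← h]; nlinarith
    · have h1 : 0 < a*t*(3 - 4*t^2)*(1 - a*c) :=
        mul_pos (mul_pos (mul_pos ha h) (by nlinarith)) (by nlinarith)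
      have h2 : 0 ≤ x*((1 - 2*t^2)*(1 - 2*(a*c))) :=
        mul_nonneg hx.le (mul_nonneg (by nlinarith) (by nlinarith))
      have h3 : 0 ≤ x^2*c*t := by positivity
      linarith
  have h4 : 0 < x^2*c^2 := by positivity
  nlinarith [mul_pos h4 hbr]

lemma denom_pos (a c t u2 x : ℝ) (ha : 0 < a) (hc : 0 < c) (hb : c*a ≤ 1/2)
    (ht : 0 ≤ t) (hu : 0 < u2) (hx : 0 < x) :
    0 < (1 - c*a)^2 * ((a + x*t)^2 + x^2*u2) * ((1 - c*a - c*x*t)^2 + c^2*x^2*u2) := by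
  have hca' : (0:ℝ) < 1 - c*a := by linarith
  have hAx : (0:ℝ) < (a + x*t)^2 + x^2*u2 := by nlinarith [mul_nonneg hx.le ht]
  have hBx : (0:ℝ) < (1 - c*a - c*x*t)^2 + c^2*x^2*u2 := by
    have h1 : 0 < c^2*x^2*u2 := by positivity
    nlinarith [sq_nonneg (1 - c*a - c*x*t)]
  exact mul_pos (mul_pos (pow_pos hca' 2) hAx) hBx

lemma auxF_mono (a c t u2 : ℝ) (ha : 0 < a) (hc : 0 < c) (hb : c*a ≤ 1/2)
    (ht : 0 ≤ t) (ht2 : t^2 ≤ 1/2) (hu : 0 < u2) (htu : t^2 + u2 = 1) :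
    MonotoneOn (auxF a c t u2) (Ici 0) := by
  apply monotoneOn_of_deriv_nonneg (convex_Ici 0) (auxF_contOn a c t u2 ha hc hb ht hu)
  · intro x hx
    rw [interior_Ici] at hx
    exact (auxF_hasDerivAt a c t u2 ha hc hb ht hu x hx).differentiableAt.differentiableWithinAt
  · intro x hx
    rw [interior_Ici] at hx
    have hD := (auxF_hasDerivAt a c t u2 ha hc hb ht hu x hx).deriv
    rw [hD, auxF_deriv_key a c t u2 ha hc hb ht ht2 hu htu x hx]
    exact div_nonneg (numer_nonneg a c t x ha hc hb ht ht2 hx)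
      (denom_pos a c t u2 x ha hc hb ht hu hx).le

lemma auxF_strictMono (a c t u2 : ℝ) (ha : 0 < a) (hc : 0 < c) (hb : c*a < 1/2)
    (ht : 0 ≤ t) (ht2 : t^2 ≤ 1/2) (hu : 0 < u2) (htu : t^2 + u2 = 1) :
    StrictMonoOn (auxF a c t u2) (Ici 0) := by
  apply strictMonoOn_of_deriv_pos (convex_Ici 0) (auxF_contOn a c t u2 ha hc hb.le ht hu)
  intro x hx
  rw [interior_Ici] at hx
  have hD := (auxF_hasDerivAt a c t u2 ha hc hb.le ht hu x hx).deriv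
  rw [hD, auxF_deriv_key a c t u2 ha hc hb.le ht ht2 hu htu x hx]
  exact div_pos (numer_pos a c t x ha hc hb ht ht2 hx)
    (denom_pos a c t u2 x ha hc hb.le ht hu hx)

lemma log_abs_one_sub_bound (z : ℂ) (hz : ‖z‖ ≤ 1/2) :
    |Real.log (‖1 - z‖)| ≤ 2 * ‖z‖ := by
  set r := ‖z‖ with hr
  have hr0 : 0 ≤ r := norm_nonneg z
  have hpos : (0:ℝ) < 1 - r := by linarith
  have h1 : 1 - r ≤ ‖1 - z‖ := by
    have h := norm_sub_norm_le 1 z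
    simpa using h
  have h2 : ‖1 - z‖ ≤ 1 + r := by
    calc ‖1 - z‖ ≤ ‖(1:ℂ)‖ + ‖z‖ := by
          simpa [sub_eq_add_neg] using norm_add_le 1 (-z)
      _ = 1 + r := by simp [hr]
  rw [abs_le]
  constructor
  · have hmono : Real.log (1 - r) ≤ Real.log (‖1 - z‖) :=
      Real.log_le_log hpos h1
    have h3 : Real.log (1 - r)⁻¹ ≤ (1 - r)⁻¹ - 1 := Real.log_le_sub_one_of_pos (by positivity)
    rw [Real.log_inv] at h3
    have h4 : (1 - r)⁻¹ ≤ 1 + 2*r := by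
      rw [inv_le_iff_one_le_mul₀ hpos]  -- guess
      nlinarith
    linarith
  · have habs : 0 < ‖1 - z‖ := by linarith
    have hmono : Real.log (‖1 - z‖) ≤ Real.log (1 + r) :=
      Real.log_le_log habs h2
    have h3 : Real.log (1 + r) ≤ (1 + r) - 1 := Real.log_le_sub_one_of_pos (by linarith)
    linarith

set_option maxHeartbeats 2000000 in

/-- For `q ∈ (0,1)`, `θ > 0` with `q^θ ≤ 1/2`, and
`φ ∈ [π/4, π/2]`, with `w(s) = q^θ + s e^{iφ}`, the function
`G(s) = −f(θ) log|w(s)| + κ(θ) Re(w(s)) + Σ_{k=0}^∞ log|1 − q^k w(s)|`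
is strictly increasing on `[0,∞)`; i.e. the contour `C_φ` is steep descent for
`−Re f₀` with maximum at `θ` (`s = 0`). -/
theorem stmt_14 (q θ φ : ℝ) (hq : q ∈ Set.Ioo (0 : ℝ) 1) (hθ : 0 < θ)
    (hqθ : q ^ θ ≤ 1 / 2) (hφ : φ ∈ Set.Icc (Real.pi / 4) (Real.pi / 2)) :
    let κ : ℝ := ∑' k : ℕ, q ^ (k : ℕ) / (1 - q ^ (θ + (k : ℝ))) ^ 2
    let f : ℝ := ∑' k : ℕ, q ^ (2 * θ + 2 * (k : ℝ)) / (1 - q ^ (θ + (k : ℝ))) ^ 2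
    let w : ℝ → ℂ := fun s =>
      ((q ^ θ : ℝ) : ℂ) + (s : ℂ) * Complex.exp ((φ : ℂ) * Complex.I)
    StrictMonoOn
      (fun s : ℝ =>
        -f * Real.log (‖w s‖) + κ * (w s).re
          + ∑' k : ℕ, Real.log (‖1 - (q : ℂ) ^ (k : ℕ) * w s‖))
      (Set.Ici 0) := by
  obtain ⟨hq0, hq1⟩ := hq
  obtain ⟨hφ1, hφ2⟩ := hφ
  intro κ f w
  have hπ := Real.pi_pos
  have ha : 0 < q ^ θ := Real.rpow_pos_of_pos hq0 θ
  have ht : 0 ≤ Real.cos φ := Real.cos_nonneg_of_mem_Icc ⟨by linarith, hφ2⟩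
  have htle : Real.cos φ ≤ Real.sqrt 2 / 2 := by
    have h := Real.cos_le_cos_of_nonneg_of_le_pi (by linarith) (by linarith) hφ1
    rwa [Real.cos_pi_div_four] at h
  have ht2 : Real.cos φ ^ 2 ≤ 1/2 := by
    nlinarith [Real.sq_sqrt (by norm_num : (0:ℝ) ≤ 2), Real.sqrt_nonneg 2]
  have hsin : 0 < Real.sin φ := Real.sin_pos_of_pos_of_lt_pi (by linarith) (by linarith)
  have hu : 0 < Real.sin φ ^ 2 := by positivity
  have htu : Real.cos φ ^ 2 + Real.sin φ ^ 2 = 1 := Real.cos_sq_add_sin_sq φ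
  have hqk0 : ∀ k : ℕ, (0:ℝ) < q ^ k := fun k => pow_pos hq0 k
  have hqk1 : ∀ k : ℕ, q ^ k ≤ 1 := fun k => pow_le_one₀ hq0.le hq1.le
  have hba : ∀ k : ℕ, q ^ k * q ^ θ ≤ 1/2 := fun k => by nlinarith [hqk0 k, hqk1 k]
  have hden : ∀ k : ℕ, (1:ℝ)/2 ≤ 1 - q ^ k * q ^ θ := fun k => by linarith [hba k]
  -- re/im computations
  have hwre : ∀ s : ℝ, (w s).re = q ^ θ + s * Real.cos φ := by
    intro s
    show (((q ^ θ : ℝ) : ℂ) + (s : ℂ) * Complex.exp ((φ : ℂ) * Complex.I)).re = _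
    simp [Complex.add_re, Complex.mul_re]
  have hwim : ∀ s : ℝ, (w s).im = s * Real.sin φ := by
    intro s
    show (((q ^ θ : ℝ) : ℂ) + (s : ℂ) * Complex.exp ((φ : ℂ) * Complex.I)).im = _
    simp [Complex.add_im, Complex.mul_im]
  have habsw : ∀ s : ℝ, Real.log (‖w s‖)
      = Real.log ((q ^ θ + s * Real.cos φ)^2 + s^2 * Real.sin φ ^ 2) / 2 := by
    intro s
    rw [Complex.norm_def, Real.log_sqrt (Complex.normSq_nonneg _), Complex.normSq_apply]
    congr 1
    rw [hwre s, hwim s]; ring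
  have habs1 : ∀ (k : ℕ) (s : ℝ), Real.log (‖1 - (q:ℂ)^(k:ℕ) * w s‖)
      = Real.log ((1 - q^(k:ℕ) * q^θ - q^(k:ℕ) * s * Real.cos φ)^2
          + (q^(k:ℕ))^2 * s^2 * Real.sin φ ^ 2) / 2 := by
    intro k s
    have hre : (1 - (q:ℂ)^(k:ℕ) * w s).re = 1 - q^(k:ℕ) * (w s).re := by
      simp [Complex.sub_re, Complex.mul_re, ← Complex.ofReal_pow]
    have him : (1 - (q:ℂ)^(k:ℕ) * w s).im = -(q^(k:ℕ) * (w s).im) := by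
      simp [Complex.sub_im, Complex.mul_im, ← Complex.ofReal_pow]
    rw [Complex.norm_def, Real.log_sqrt (Complex.normSq_nonneg _), Complex.normSq_apply]
    congr 1
    rw [hre, him, hwre s, hwim s]; ring
  -- kappa and f as sums
  have hκ : κ = ∑' k : ℕ, q^(k:ℕ) / (1 - q^(k:ℕ) * q^θ)^2 := by
    refine tsum_congr fun k => ?_
    rw [Real.rpow_add hq0, Real.rpow_natCast]
    ring_nf
  have hf : f = ∑' k : ℕ, (q^(k:ℕ) * q^θ)^2 / (1 - q^(k:ℕ) * q^θ)^2 := by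
    refine tsum_congr fun k => ?_
    rw [show (2*θ+2*(k:ℝ)) = (θ+(k:ℝ)) * ((2:ℕ):ℝ) by push_cast; ring,
      Real.rpow_mul hq0.le, Real.rpow_natCast, Real.rpow_add hq0, Real.rpow_natCast]
    ring_nf
  -- summability
  have hgeo : Summable (fun k : ℕ => q^k) := summable_geometric_of_lt_one hq0.le hq1
  have Sκ : Summable (fun k : ℕ => q^(k:ℕ) / (1 - q^(k:ℕ) * q^θ)^2) := by
    refine Summable.of_nonneg_of_le (fun k => by positivity) (fun k => ?_) (hgeo.mul_left 4)
    have h := hden k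
    rw [div_le_iff₀ (by nlinarith)]
    have h2 : (0:ℝ) ≤ 4*(1 - q^k*q^θ)^2 - 1 := by nlinarith
    nlinarith [mul_nonneg (hqk0 k).le h2]
  have Sf : Summable (fun k : ℕ => (q^(k:ℕ) * q^θ)^2 / (1 - q^(k:ℕ) * q^θ)^2) := by
    refine Summable.of_nonneg_of_le (fun k => by positivity) (fun k => ?_) (hgeo.mul_left 4)
    have h := hden k
    rw [div_le_iff₀ (by nlinarith)]
    have b1 : (q^k)^2 ≤ q^k := by nlinarith [hqk0 k, hqk1 k]
    have b2 : (q^θ)^2 ≤ 1/4 := by nlinarith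
    have h2 : (0:ℝ) ≤ 4*(1 - q^k*q^θ)^2 - 1 := by nlinarith
    nlinarith [mul_le_mul b1 b2 (by positivity) (hqk0 k).le, mul_nonneg (hqk0 k).le h2, hqk0 k]
  have Sℓ : ∀ s : ℝ, Summable (fun k : ℕ => Real.log (‖1 - (q:ℂ)^(k:ℕ) * w s‖)) := by
    intro s
    have hR0 : 0 ≤ ‖w s‖ := norm_nonneg _
    have htend : Filter.Tendsto (fun k : ℕ => q^k) Filter.atTop (nhds 0) :=
      tendsto_pow_atTop_nhds_zero_of_lt_one hq0.le hq1
    have hev : ∀ᶠ k in Filter.atTop, q^(k:ℕ) * ‖w s‖ ≤ 1/2 := by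
      have h2 : ∀ᶠ k in Filter.atTop, q^k < (1/2)/(‖w s‖+1) :=
        htend.eventually (gt_mem_nhds (by positivity))
      filter_upwards [h2] with k hk
      have h3 : q^k * (‖w s‖ + 1) < 1/2 := (lt_div_iff₀ (by positivity)).mp hk
      nlinarith [hqk0 k]
    refine Summable.of_norm_bounded_eventually (g := fun k => (2*‖w s‖) * q^k)
      (hgeo.mul_left _) ?_
    rw [Nat.cofinite_eq_atTop]
    filter_upwards [hev] with k hk
    have habs : ‖(q:ℂ)^(k:ℕ) * w s‖ = q^(k:ℕ) * ‖w s‖ := by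
      rw [norm_mul, norm_pow, Complex.norm_real, Real.norm_eq_abs, abs_of_pos hq0]
    have hb := log_abs_one_sub_bound ((q:ℂ)^(k:ℕ) * w s) (by rw [habs]; exact hk)
    rw [habs] at hb
    rw [Real.norm_eq_abs]
    exact hb.trans_eq (by ring)
  -- per-k function equality
  have hgk : ∀ k : ℕ, (fun s : ℝ => q^(k:ℕ)/(1 - q^(k:ℕ)*q^θ)^2 * (w s).re
      - (q^(k:ℕ)*q^θ)^2/(1 - q^(k:ℕ)*q^θ)^2 * Real.log (‖w s‖)
      + Real.log (‖1 - (q:ℂ)^(k:ℕ) * w s‖))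
      = auxF (q^θ) (q^(k:ℕ)) (Real.cos φ) (Real.sin φ ^ 2) := by
    intro k
    funext s
    rw [hwre s, habsw s, habs1 k s]
    show _ = _ - _ * (Real.log ((q^θ + s*Real.cos φ)^2 + s^2*Real.sin φ^2)/2)
      + Real.log ((1 - q^(k:ℕ)*q^θ - q^(k:ℕ)*s*Real.cos φ)^2
          + (q^(k:ℕ))^2*s^2*Real.sin φ^2)/2
    ring
  -- main rearrangement
  have key : ∀ s : ℝ, -f * Real.log (‖w s‖) + κ * (w s).re
      + ∑' k : ℕ, Real.log (‖1 - (q:ℂ)^(k:ℕ) * w s‖)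
      = ∑' k : ℕ, auxF (q^θ) (q^(k:ℕ)) (Real.cos φ) (Real.sin φ ^ 2) s := by
    intro s
    have e1 : κ * (w s).re = ∑' k : ℕ, q^(k:ℕ)/(1 - q^(k:ℕ)*q^θ)^2 * (w s).re := by
      rw [hκ, ← tsum_mul_right]
    have e2 : f * Real.log (‖w s‖)
        = ∑' k : ℕ, (q^(k:ℕ)*q^θ)^2/(1 - q^(k:ℕ)*q^θ)^2 * Real.log (‖w s‖) := by
      rw [hf, ← tsum_mul_right]
    have e3 : ∑' k : ℕ, auxF (q^θ) (q^(k:ℕ)) (Real.cos φ) (Real.sin φ ^ 2) s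
        = ∑' k : ℕ, (q^(k:ℕ)/(1 - q^(k:ℕ)*q^θ)^2 * (w s).re
          - (q^(k:ℕ)*q^θ)^2/(1 - q^(k:ℕ)*q^θ)^2 * Real.log (‖w s‖)
          + Real.log (‖1 - (q:ℂ)^(k:ℕ) * w s‖)) :=
      tsum_congr fun k => (congrFun (hgk k) s).symm
    rw [e3, Summable.tsum_add (((Sκ.mul_right _).sub (Sf.mul_right _))) (Sℓ s),
      Summable.tsum_sub (Sκ.mul_right _) (Sf.mul_right _), ← e1, ← e2]
    ring
  intro s₁ hs₁ s₂ hs₂ h12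
  beta_reduce
  have hb1 : q^(1:ℕ) * q^θ < 1/2 := by
    rw [pow_one]; nlinarith
  calc -f * Real.log (‖w s₁‖) + κ * (w s₁).re
        + ∑' k : ℕ, Real.log (‖1 - (q:ℂ)^(k:ℕ) * w s₁‖)
      = ∑' k : ℕ, auxF (q^θ) (q^(k:ℕ)) (Real.cos φ) (Real.sin φ ^ 2) s₁ := key s₁
    _ < ∑' k : ℕ, auxF (q^θ) (q^(k:ℕ)) (Real.cos φ) (Real.sin φ ^ 2) s₂ := by
        refine Summable.tsum_lt_tsum (i := 1) (fun k => ?_) ?_ ?_ ?_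
        · exact auxF_mono (q^θ) (q^(k:ℕ)) (Real.cos φ) (Real.sin φ ^ 2) ha (hqk0 k)
            (hba k) ht ht2 hu htu hs₁ hs₂ h12.le
        · exact auxF_strictMono (q^θ) (q^(1:ℕ)) (Real.cos φ) (Real.sin φ ^ 2) ha (hqk0 1)
            hb1 ht ht2 hu htu hs₁ hs₂ h12
        · have h4 : (fun k : ℕ => auxF (q^θ) (q^(k:ℕ)) (Real.cos φ) (Real.sin φ ^ 2) s₁)
              = fun k : ℕ => (q^(k:ℕ)/(1 - q^(k:ℕ)*q^θ)^2 * (w s₁).re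
                - (q^(k:ℕ)*q^θ)^2/(1 - q^(k:ℕ)*q^θ)^2 * Real.log (‖w s₁‖)
                + Real.log (‖1 - (q:ℂ)^(k:ℕ) * w s₁‖)) :=
            funext fun k => (congrFun (hgk k) s₁).symm
          rw [h4]
          exact ((Sκ.mul_right _).sub (Sf.mul_right _)).add (Sℓ s₁)
        · have h4 : (fun k : ℕ => auxF (q^θ) (q^(k:ℕ)) (Real.cos φ) (Real.sin φ ^ 2) s₂)
              = fun k : ℕ => (q^(k:ℕ)/(1 - q^(k:ℕ)*q^θ)^2 * (w s₂).re
                - (q^(k:ℕ)*q^θ)^2/(1 - q^(k:ℕ)*q^θ)^2 * Real.log (‖w s₂‖)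
                + Real.log (‖1 - (q:ℂ)^(k:ℕ) * w s₂‖)) :=
            funext fun k => (congrFun (hgk k) s₂).symm
          rw [h4]
          exact ((Sκ.mul_right _).sub (Sf.mul_right _)).add (Sℓ s₂)
    _ = -f * Real.log (‖w s₂‖) + κ * (w s₂).re
        + ∑' k : ℕ, Real.log (‖1 - (q:ℂ)^(k:ℕ) * w s₂‖) := (key s₂).symm
end

section
/- Let q ∈ (0,1) and θ > 0. Define, for Z ∈ ℂ with Re Z > 0, Re f₀(Z) = −f(θ)(log q) Re Z + κ(θ) Re(q^Z) + Σ_{k=0}^∞ log|1 − q^{Z+k}|. Then for every γ ≥ 0: (i) the map t ↦ Re f₀(θ + γ + it) is periodic with period 2π/|log q|, i.e. Re f₀(θ + γ + i(t + 2π/|log q|)) = Re f₀(θ + γ + it) for all t ∈ ℝ; (ii) it is even in t, Re f₀(θ + γ − it) = Re f₀(θ + γ + it); and (iii) it is strictly decreasing on [0, π/|log q|]. In particular, the vertical contour {θ + γ + it : t ∈ [π/log q, −π/log q]} is steep descent for Re f₀, which attains its maximum at t = 0. -/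
open Real

private lemma cpow_eval {q : ℝ} (hq : 0 < q) (x t : ℝ) :
    (q:ℂ) ^ ((x:ℂ) + (t:ℂ)*Complex.I)
      = ((q ^ x : ℝ) : ℂ) * Complex.exp (((t * Real.log q : ℝ) : ℂ) * Complex.I) := by
  have hne : (q:ℂ) ≠ 0 := by exact_mod_cast hq.ne'
  rw [Complex.cpow_def_of_ne_zero hne]
  have h1 : Complex.log q * ((x:ℂ) + (t:ℂ)*Complex.I)
      = ((x * Real.log q : ℝ):ℂ) + ((t * Real.log q : ℝ):ℂ) * Complex.I := by
    rw [← Complex.ofReal_log hq.le]; push_cast; ring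
  rw [h1, Complex.exp_add, ← Complex.ofReal_exp]
  congr 2
  rw [Real.rpow_def_of_pos hq, mul_comm]

private lemma abs_one_sub_sq (a φ : ℝ) :
    (‖(1 - (a:ℂ) * Complex.exp ((φ:ℂ) * Complex.I))‖)^2
      = 1 - 2*a*Real.cos φ + a^2 := by
  rw [Complex.sq_norm, Complex.normSq_apply]
  simp [Complex.sub_re, Complex.sub_im, Complex.mul_re, Complex.mul_im,
    Complex.exp_ofReal_mul_I_re, Complex.exp_ofReal_mul_I_im]
  nlinarith [Real.sin_sq_add_cos_sq φ]

private lemma core_ineq {a b c₁ c₂ : ℝ} (ha : 0 < a) (ha1 : a < 1)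
    (hb : a / (1 - a)^2 ≤ b) (hc : c₂ < c₁) (hc1 : c₁ ≤ 1) :
    Real.log (1 - 2*a*c₂ + a^2) / 2 < Real.log (1 - 2*a*c₁ + a^2) / 2 + (c₁ - c₂) * b := by
  set u₁ := 1 - 2*a*c₁ + a^2 with hu₁
  set u₂ := 1 - 2*a*c₂ + a^2 with hu₂
  have h1a : 0 < 1 - a := by linarith
  have hu₁ge : (1-a)^2 ≤ u₁ := by nlinarith
  have hu₁pos : 0 < u₁ := lt_of_lt_of_le (by positivity) hu₁ge
  have hu21 : u₁ < u₂ := by simp only [hu₁, hu₂]; nlinarith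
  have hu₂pos : 0 < u₂ := hu₁pos.trans hu21
  have hratio1 : 1 < u₂ / u₁ := (one_lt_div hu₁pos).mpr hu21
  have hlt : Real.log (u₂/u₁) < u₂/u₁ - 1 :=
    Real.log_lt_sub_one_of_pos (by positivity) hratio1.ne'
  rw [Real.log_div hu₂pos.ne' hu₁pos.ne'] at hlt
  have he : u₂ / u₁ - 1 = 2*a*(c₁ - c₂)/u₁ := by
    field_simp; simp only [hu₁, hu₂]; ring
  rw [he] at hlt
  have h2 : 2*a*(c₁ - c₂)/u₁ ≤ 2*a*(c₁ - c₂)/(1-a)^2 :=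
    div_le_div_of_nonneg_left (by nlinarith) (by positivity) hu₁ge
  have h3 : 2*a*(c₁ - c₂)/(1-a)^2 ≤ 2*(c₁-c₂)*b := by
    have : 2*a*(c₁ - c₂)/(1-a)^2 = 2*(c₁-c₂)*(a/(1-a)^2) := by ring
    rw [this]
    exact mul_le_mul_of_nonneg_left hb (by linarith)
  linarith

private lemma log_u_abs_bound {a m c : ℝ} (ha : 0 < a) (ham : a ≤ m) (hm : m < 1) (hc : |c| ≤ 1) :
    |Real.log (1 - 2*a*c + a^2)| ≤ 3 * a / (1 - m) := by
  obtain ⟨hc1, hc2⟩ := abs_le.mp hc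
  have ha1 : a < 1 := lt_of_le_of_lt ham hm
  have h1a : 0 < 1 - a := by linarith
  have h1m : 0 < 1 - m := by linarith
  have h1 : (1-a)^2 ≤ 1 - 2*a*c + a^2 := by nlinarith
  have hu : 0 < 1 - 2*a*c + a^2 := lt_of_lt_of_le (by positivity) h1
  rw [abs_le]
  constructor
  · have hlog101 : Real.log ((1-a)^2) ≤ Real.log (1 - 2*a*c + a^2) :=
      Real.log_le_log (by positivity) h1
    rw [Real.log_pow] at hlog101
    have hinv : Real.log (1/(1-a)) ≤ 1/(1-a) - 1 :=
      Real.log_le_sub_one_of_pos (by positivity)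
    rw [one_div, Real.log_inv] at hinv
    have heq : (1-a)⁻¹ - 1 = a/(1-a) := by field_simp; ring
    have hia : -(a/(1-a)) ≤ Real.log (1-a) := by rw [heq] at hinv; linarith
    have hfr : a/(1-a) ≤ 3*a/(2*(1-m)) := by
      rw [div_le_div_iff₀ h1a (by positivity)]
      nlinarith
    have hfr2 : 2*(3*a/(2*(1-m))) = 3*a/(1-m) := by field_simp
    push_cast at hlog101
    linarith [hlog101, hia, hfr, hfr2]
  · have h2 := Real.log_le_sub_one_of_pos hu
    have : 3*a ≤ 3*a/(1-m) := by
      rw [le_div_iff₀ h1m]; nlinarith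
    nlinarith

/-- For `q ∈ (0,1)`, `θ > 0`, with
`Re f₀(Z) = −f(θ)(log q) Re Z + κ(θ) Re(q^Z) + Σ log|1 − q^(Z+k)|`, for every
`γ ≥ 0` the map `t ↦ Re f₀(θ+γ+it)` is (i) periodic with period `2π/|log q|`,
(ii) even in `t`, and (iii) strictly decreasing on `[0, π/|log q|]`; i.e. the
vertical contour is steep descent for `Re f₀` with maximum at `t = 0`. -/
theorem stmt_15 (q θ : ℝ) (hq : q ∈ Set.Ioo (0 : ℝ) 1) (hθ : 0 < θ) :
    let κ : ℝ := ∑' k : ℕ, q ^ (k : ℕ) / (1 - q ^ (θ + (k : ℝ))) ^ 2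
    let f : ℝ := ∑' k : ℕ, q ^ (2 * θ + 2 * (k : ℝ)) / (1 - q ^ (θ + (k : ℝ))) ^ 2
    let F : ℂ → ℝ := fun Z =>
      -f * Real.log q * Z.re + κ * ((q : ℂ) ^ Z).re
        + ∑' k : ℕ, Real.log ‖(1 - (q : ℂ) ^ (Z + (k : ℕ)))‖
    ∀ γ : ℝ, 0 ≤ γ →
      (∀ t : ℝ,
        F (((θ + γ : ℝ) : ℂ) + ((t + 2 * Real.pi / |Real.log q| : ℝ) : ℂ) * Complex.I)
          = F (((θ + γ : ℝ) : ℂ) + (t : ℂ) * Complex.I)) ∧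
      (∀ t : ℝ,
        F (((θ + γ : ℝ) : ℂ) - (t : ℂ) * Complex.I)
          = F (((θ + γ : ℝ) : ℂ) + (t : ℂ) * Complex.I)) ∧
      StrictAntiOn (fun t : ℝ => F (((θ + γ : ℝ) : ℂ) + (t : ℂ) * Complex.I))
        (Set.Icc 0 (Real.pi / |Real.log q|)) := by
  intro κ f F γ hγ
  obtain ⟨hq0, hq1⟩ := hq
  set x := θ + γ with hxdef
  have hθx : θ ≤ x := by simp [hxdef]; linarith
  have hx : 0 < x := by linarith
  have hlq : Real.log q < 0 := Real.log_neg hq0 hq1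
  have habs : |Real.log q| = -Real.log q := abs_of_neg hlq
  have hqθ1 : q ^ θ < 1 := Real.rpow_lt_one hq0.le hq1 hθ
  have hqθpos : 0 < q ^ θ := Real.rpow_pos_of_pos hq0 θ
  -- per-k basic facts
  have hay : ∀ k : ℕ, q ^ (x + (k:ℝ)) ≤ q ^ θ := fun k =>
    Real.rpow_le_rpow_of_exponent_ge hq0 hq1.le
      (by have : (0:ℝ) ≤ (k:ℝ) := Nat.cast_nonneg k; linarith)
  have haθ : ∀ k : ℕ, q ^ (θ + (k:ℝ)) ≤ q ^ θ := fun k =>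
    Real.rpow_le_rpow_of_exponent_ge hq0 hq1.le
      (by have : (0:ℝ) ≤ (k:ℝ) := Nat.cast_nonneg k; linarith)
  have haθx : ∀ k : ℕ, q ^ (x + (k:ℝ)) ≤ q ^ (θ + (k:ℝ)) := fun k =>
    Real.rpow_le_rpow_of_exponent_ge hq0 hq1.le (by linarith)
  have hapos : ∀ k : ℕ, 0 < q ^ (x + (k:ℝ)) := fun k => Real.rpow_pos_of_pos hq0 _
  have hdθ : ∀ k : ℕ, 0 < 1 - q ^ (θ + (k:ℝ)) := fun k => by
    have := haθ k; linarith
  -- evaluation of F on the vertical line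
  have hF : ∀ t : ℝ, F (((x:ℝ):ℂ) + (t:ℂ)*Complex.I)
      = -f * Real.log q * x + κ * (q^x * Real.cos (t*Real.log q))
        + (∑' k:ℕ, Real.log (1 - 2*q^(x+(k:ℝ))*Real.cos (t*Real.log q) + (q^(x+(k:ℝ)))^2))/2 := by
    intro t
    have hre : (((x:ℝ):ℂ) + (t:ℂ)*Complex.I).re = x := by simp
    have hqZre : ((q:ℂ) ^ (((x:ℝ):ℂ) + (t:ℂ)*Complex.I)).re
        = q^x * Real.cos (t*Real.log q) := by
      rw [cpow_eval hq0, Complex.re_ofReal_mul, Complex.exp_ofReal_mul_I_re]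
    have hlogk : ∀ k : ℕ, Real.log ‖(1 - (q:ℂ) ^ ((((x:ℝ):ℂ) + (t:ℂ)*Complex.I) + (k:ℕ)))‖
        = Real.log (1 - 2*q^(x+(k:ℝ))*Real.cos (t*Real.log q) + (q^(x+(k:ℝ)))^2) / 2 := by
      intro k
      have hexp : (((x:ℝ):ℂ) + (t:ℂ)*Complex.I) + (k:ℕ) = (((x+(k:ℝ)):ℝ):ℂ) + (t:ℂ)*Complex.I := by
        push_cast; ring
      rw [hexp, cpow_eval hq0]
      have h2 := abs_one_sub_sq (q ^ (x+(k:ℝ))) (t * Real.log q)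
      have h3 : Real.log ((‖(1 - ((q ^ (x+(k:ℝ)) : ℝ):ℂ) * Complex.exp (((t * Real.log q : ℝ):ℂ) * Complex.I))‖)^2)
          = 2 * Real.log (‖(1 - ((q ^ (x+(k:ℝ)) : ℝ):ℂ) * Complex.exp (((t * Real.log q : ℝ):ℂ) * Complex.I))‖) := by
        rw [Real.log_pow]; push_cast; ring
      rw [h2] at h3
      linarith [h3]
    simp only [F, hre, hqZre]
    rw [tsum_congr hlogk, tsum_div_const]
  -- summability facts
  have hgeo : Summable (fun k : ℕ => q ^ k) := summable_geometric_of_lt_one hq0.le hq1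
  have hκsum : Summable (fun k : ℕ => q ^ k / (1 - q ^ (θ + (k:ℝ)))^2) := by
    apply Summable.of_nonneg_of_le (fun k => by positivity)
      (fun k => ?_) (hgeo.mul_right ((1 - q^θ)^2)⁻¹)
    rw [div_eq_mul_inv]
    apply mul_le_mul_of_nonneg_left _ (by positivity)
    apply inv_anti₀ (pow_pos (by linarith) 2)
    have h1 := haθ k; have h2 := hdθ k
    nlinarith
  have heqb : (fun k : ℕ => q ^ (x + (k:ℝ)) / (1 - q ^ (θ + (k:ℝ)))^2)
      = fun k : ℕ => (q ^ k / (1 - q ^ (θ + (k:ℝ)))^2) * q ^ x := by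
    funext k
    rw [Real.rpow_add hq0, Real.rpow_natCast]
    ring
  have hbsum : Summable (fun k : ℕ => q ^ (x + (k:ℝ)) / (1 - q ^ (θ + (k:ℝ)))^2) := by
    rw [heqb]; exact hκsum.mul_right _
  have htsumb : ∑' k : ℕ, q ^ (x + (k:ℝ)) / (1 - q ^ (θ + (k:ℝ)))^2 = κ * q ^ x := by
    rw [heqb, tsum_mul_right]
  have hgsum : ∀ c : ℝ, |c| ≤ 1 →
      Summable (fun k : ℕ => Real.log (1 - 2*q^(x+(k:ℝ))*c + (q^(x+(k:ℝ)))^2)) := by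
    intro c hc
    apply Summable.of_abs
    apply Summable.of_nonneg_of_le (fun k => abs_nonneg _) (fun k => ?_)
      (hgeo.mul_left (3 * q ^ x / (1 - q ^ θ)))
    calc |Real.log (1 - 2*q^(x+(k:ℝ))*c + (q^(x+(k:ℝ)))^2)|
        ≤ 3 * q^(x+(k:ℝ)) / (1 - q^θ) := log_u_abs_bound (hapos k) (hay k) hqθ1 hc
      _ = 3 * q ^ x / (1 - q ^ θ) * q ^ k := by
          rw [Real.rpow_add hq0, Real.rpow_natCast]; ring
  refine ⟨fun t => ?_, fun t => ?_, ?_⟩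
  · rw [hF (t + 2 * Real.pi / |Real.log q|), hF t]
    have hper : (t + 2 * Real.pi / |Real.log q|) * Real.log q = t * Real.log q - 2 * Real.pi := by
      have hne : Real.log q ≠ 0 := hlq.ne
      rw [habs, add_mul, div_neg, neg_mul, div_mul_cancel₀ _ hne]
      ring
    rw [hper, Real.cos_sub_two_pi]
  · have hE : ((x:ℝ):ℂ) - (t:ℂ)*Complex.I = ((x:ℝ):ℂ) + ((-t:ℝ):ℂ)*Complex.I := by
      push_cast; ring
    have hcos : Real.cos (-t * Real.log q) = Real.cos (t * Real.log q) := by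
      rw [neg_mul, Real.cos_neg]
    rw [hE, hF (-t), hF t, hcos]
  · intro t₁ ht₁ t₂ ht₂ hlt
    show F (((x:ℝ):ℂ) + (t₂:ℂ)*Complex.I) < F (((x:ℝ):ℂ) + (t₁:ℂ)*Complex.I)
    rw [hF t₁, hF t₂]
    have hLpos : 0 < |Real.log q| := abs_pos.mpr hlq.ne
    obtain ⟨ht₁0, ht₁π⟩ := ht₁
    obtain ⟨ht₂0, ht₂π⟩ := ht₂
    have hcrw : ∀ s : ℝ, Real.cos (s * Real.log q) = Real.cos (s * |Real.log q|) := by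
      intro s
      rw [habs, mul_neg, Real.cos_neg]
    have hmem : ∀ s : ℝ, 0 ≤ s → s ≤ Real.pi / |Real.log q| → s * |Real.log q| ∈ Set.Icc 0 Real.pi := by
      intro s h0 hπ
      exact ⟨by positivity, (le_div_iff₀ hLpos).mp hπ⟩
    have hc21 : Real.cos (t₂ * Real.log q) < Real.cos (t₁ * Real.log q) := by
      rw [hcrw t₁, hcrw t₂]
      exact Real.strictAntiOn_cos (hmem t₁ ht₁0 ht₁π) (hmem t₂ ht₂0 ht₂π)
        (mul_lt_mul_of_pos_right hlt hLpos)
    set c₁ := Real.cos (t₁ * Real.log q) with hc₁def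
    set c₂ := Real.cos (t₂ * Real.log q) with hc₂def
    have hc1le : c₁ ≤ 1 := Real.cos_le_one _
    have hc1abs : |c₁| ≤ 1 := Real.abs_cos_le_one _
    have hc2abs : |c₂| ≤ 1 := Real.abs_cos_le_one _
    have key : (∑' k:ℕ, Real.log (1 - 2*q^(x+(k:ℝ))*c₂ + (q^(x+(k:ℝ)))^2))/2
        < (∑' k:ℕ, Real.log (1 - 2*q^(x+(k:ℝ))*c₁ + (q^(x+(k:ℝ)))^2))/2
          + (c₁ - c₂) * (κ * q ^ x) := by
      have hs1 : Summable (fun k : ℕ =>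
          Real.log (1 - 2*q^(x+(k:ℝ))*c₁ + (q^(x+(k:ℝ)))^2) / 2) :=
        (hgsum c₁ hc1abs).div_const 2
      have hs2 : Summable (fun k : ℕ =>
          Real.log (1 - 2*q^(x+(k:ℝ))*c₂ + (q^(x+(k:ℝ)))^2) / 2) :=
        (hgsum c₂ hc2abs).div_const 2
      have hs3 : Summable (fun k : ℕ =>
          (c₁ - c₂) * (q ^ (x + (k:ℝ)) / (1 - q ^ (θ + (k:ℝ)))^2)) :=
        hbsum.mul_left _
      rw [← htsumb, ← tsum_div_const, ← tsum_div_const, ← tsum_mul_left,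
        ← Summable.tsum_add hs1 hs3]
      have hpt : ∀ k : ℕ,
          Real.log (1 - 2*q^(x+(k:ℝ))*c₂ + (q^(x+(k:ℝ)))^2) / 2
          < Real.log (1 - 2*q^(x+(k:ℝ))*c₁ + (q^(x+(k:ℝ)))^2) / 2
            + (c₁ - c₂) * (q ^ (x + (k:ℝ)) / (1 - q ^ (θ + (k:ℝ)))^2) := by
        intro k
        have ha1 : q ^ (x+(k:ℝ)) < 1 := lt_of_le_of_lt (hay k) hqθ1
        have hbk : q ^ (x+(k:ℝ)) / (1 - q ^ (x+(k:ℝ)))^2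
            ≤ q ^ (x+(k:ℝ)) / (1 - q ^ (θ+(k:ℝ)))^2 := by
          apply div_le_div_of_nonneg_left (hapos k).le (pow_pos (hdθ k) 2)
          have h1 := haθx k
          exact pow_le_pow_left₀ (hdθ k).le (by linarith) 2
        exact core_ineq (hapos k) ha1 hbk hc21 hc1le
      exact Summable.tsum_lt_tsum (fun k => (hpt k).le) (hpt 0) hs2 (hs1.add hs3)
    have hring : (c₁ - c₂) * (κ * q ^ x) = κ * (q^x * c₁) - κ * (q^x * c₂) := by ring
    linarith
end

section
/- Let q ∈ (0,1), θ > 0 and γ ∈ ℝ with θ + γ > 0. Define, for Z ∈ ℂ with Re Z > 0, Re f₀(Z) = −f(θ)(log q) Re Z + κ(θ) Re(q^Z) + Σ_{k=0}^∞ log|1 − q^{Z+k}|. Then the function t ↦ Re f₀(θ + γ + it) is differentiable on ℝ and its derivative at every t ∈ ℝ equals −sin(t log q) · log q · Σ_{k=0}^∞ q^{θ+γ+k} ( 1/(1 − q^{θ+k})² − 1/|1 − q^{θ+γ+it+k}|² ). -/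
private lemma aux_cpow (q x s : ℝ) (hq0 : 0 < q) :
    (q:ℂ) ^ ((x:ℂ) + (s:ℂ)*Complex.I)
      = ((q ^ x : ℝ) : ℂ) * Complex.exp ((s * Real.log q : ℝ) * Complex.I) := by
  rw [Complex.cpow_def_of_ne_zero (by exact_mod_cast hq0.ne'), ← Complex.ofReal_log hq0.le,
    Real.rpow_def_of_pos hq0, Complex.ofReal_exp, ← Complex.exp_add]
  congr 1; push_cast; ring

private lemma aux_re (r a : ℝ) :
    ((r:ℂ) * Complex.exp ((a:ℝ) * Complex.I)).re = r * Real.cos a := by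
  simp [Complex.exp_mul_I, Complex.cos_ofReal_re, Complex.sin_ofReal_re]

private lemma aux_abs_sq (r a : ℝ) :
    ‖1 - (r:ℂ) * Complex.exp ((a:ℝ) * Complex.I)‖ ^ 2
      = 1 - 2 * r * Real.cos a + r ^ 2 := by
  rw [Complex.sq_norm, Complex.normSq_apply]
  simp [Complex.exp_mul_I, Complex.cos_ofReal_re, Complex.sin_ofReal_re]
  nlinarith [Real.sin_sq_add_cos_sq a]

/-- For `q ∈ (0,1)`, `θ > 0` and `γ` with `θ + γ > 0`, the map
`t ↦ Re f₀(θ+γ+it)` is differentiable with derivative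
`−sin(t log q) · log q · Σ_{k=0}^∞ q^(θ+γ+k)(1/(1−q^(θ+k))² − 1/|1−q^(θ+γ+it+k)|²)`. -/
theorem stmt_16 (q θ γ : ℝ) (hq : q ∈ Set.Ioo (0 : ℝ) 1) (hθ : 0 < θ)
    (hγ : 0 < θ + γ) :
    let κ : ℝ := ∑' k : ℕ, q ^ (k : ℕ) / (1 - q ^ (θ + (k : ℝ))) ^ 2
    let f : ℝ := ∑' k : ℕ, q ^ (2 * θ + 2 * (k : ℝ)) / (1 - q ^ (θ + (k : ℝ))) ^ 2
    let F : ℂ → ℝ := fun Z =>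
      -f * Real.log q * Z.re + κ * ((q : ℂ) ^ Z).re
        + ∑' k : ℕ, Real.log ‖(1 - (q : ℂ) ^ (Z + (k : ℕ)))‖
    ∀ t : ℝ,
      HasDerivAt (fun s : ℝ => F (((θ + γ : ℝ) : ℂ) + (s : ℂ) * Complex.I))
        (-Real.sin (t * Real.log q) * Real.log q *
          ∑' k : ℕ,
            q ^ (θ + γ + (k : ℝ)) *
              (1 / (1 - q ^ (θ + (k : ℝ))) ^ 2
                - 1 / ‖
                    (1 - (q : ℂ) ^ (((θ + γ + (k : ℝ) : ℝ) : ℂ) + (t : ℂ) * Complex.I))‖ ^ 2)) t := by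
  intro κ f F t
  obtain ⟨hq0, hq1⟩ := hq
  set L := Real.log q with hLdef
  set c := θ + γ with hc
  set r : ℕ → ℝ := fun k => q ^ (c + (k:ℝ)) with hrdef
  have hr_pos : ∀ k, 0 < r k := fun k => Real.rpow_pos_of_pos hq0 _
  have hr_lt1 : ∀ k, r k < 1 := by
    intro k
    apply Real.rpow_lt_one hq0.le hq1
    have := Nat.cast_nonneg (α := ℝ) k; linarith
  have hr_le : ∀ k, r k ≤ r 0 := by
    intro k
    apply Real.rpow_le_rpow_of_exponent_ge hq0 hq1.le
    have := Nat.cast_nonneg (α := ℝ) k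
    push_cast; linarith
  set δ := (1 - r 0)^2 with hδdef
  have hδ : 0 < δ := by
    have h : 0 < 1 - r 0 := by linarith [hr_lt1 0]
    exact pow_pos h 2
  set D : ℕ → ℝ → ℝ := fun k s => 1 - 2 * r k * Real.cos (s*L) + r k ^ 2 with hDdef
  have hDge : ∀ k s, δ ≤ D k s := by
    intro k s
    have h1 : (1 - r k)^2 ≤ D k s := by
      have := Real.cos_le_one (s*L)
      have := hr_pos k
      simp only [hDdef]; nlinarith
    have h2 : δ ≤ (1 - r k)^2 := by
      have key : 0 ≤ (r 0 - r k) * (2 - r 0 - r k) :=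
        mul_nonneg (by linarith [hr_le k]) (by linarith [hr_lt1 0, hr_lt1 k])
      rw [hδdef]; nlinarith [key]
    linarith
  have hDpos : ∀ k s, 0 < D k s := fun k s => lt_of_lt_of_le hδ (hDge k s)
  have hr_eq : ∀ k : ℕ, r k = q ^ c * q ^ (k:ℕ) := by
    intro k
    show q ^ (c + (k:ℝ)) = _
    rw [Real.rpow_add hq0, Real.rpow_natCast]
  have hsum_r : Summable r := by
    apply Summable.congr (f := fun k : ℕ => q ^ c * q ^ (k:ℕ))
    · exact (summable_geometric_of_lt_one hq0.le hq1).mul_left _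
    · exact fun k => (hr_eq k).symm
  -- complex power identities
  have hw : ∀ (k : ℕ) (s : ℝ),
      (q:ℂ) ^ (((c:ℝ):ℂ) + (s:ℂ)*Complex.I + (k:ℕ))
        = ((r k : ℝ):ℂ) * Complex.exp ((s*L:ℝ)*Complex.I) := by
    intro k s
    rw [← aux_cpow (q := q) (x := c + (k:ℝ)) (s := s) hq0]
    congr 1; push_cast; ring
  have habs : ∀ (k : ℕ) (s : ℝ),
      ‖1 - (q:ℂ) ^ (((c:ℝ):ℂ) + (s:ℂ)*Complex.I + (k:ℕ))‖ ^ 2 = D k s := by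
    intro k s; rw [hw, aux_abs_sq]
  have habs' : ∀ (k : ℕ),
      ‖1 - (q:ℂ) ^ (((c + (k:ℝ) : ℝ):ℂ) + (t:ℂ)*Complex.I)‖ ^ 2 = D k t := by
    intro k
    rw [aux_cpow (q := q) (x := c + (k:ℝ)) (s := t) hq0, aux_abs_sq]
  have hlog : ∀ (k : ℕ) (s : ℝ),
      Real.log ‖1 - (q:ℂ) ^ (((c:ℝ):ℂ) + (s:ℂ)*Complex.I + (k:ℕ))‖
        = (1/2) * Real.log (D k s) := by
    intro k s
    rw [← habs k s, Real.log_pow]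
    push_cast; ring
  set G : ℕ → ℝ → ℝ := fun k s => (1/2) * Real.log (D k s) with hGdef
  set G' : ℕ → ℝ → ℝ := fun k s => r k * L * Real.sin (s*L) / D k s with hG'def
  have hcosD : ∀ (k : ℕ) (s : ℝ),
      HasDerivAt (fun s => D k s) (2 * r k * L * Real.sin (s*L)) s := by
    intro k s
    have h1 : HasDerivAt (fun s : ℝ => s * L) L s := by
      simpa using (hasDerivAt_id s).mul_const L
    have h2 : HasDerivAt (fun s : ℝ => Real.cos (s*L)) (-Real.sin (s*L) * L) s :=
      h1.cos
    have h3 := ((hasDerivAt_const s (1:ℝ)).sub (h2.const_mul (2 * r k))).add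
      (hasDerivAt_const s (r k ^ 2))
    refine h3.congr_deriv ?_
    ring
  have hG : ∀ (k : ℕ) (s : ℝ), HasDerivAt (G k) (G' k s) s := by
    intro k s
    have h4 := ((hcosD k s).log (hDpos k s).ne').const_mul (1/2 : ℝ)
    refine h4.congr_deriv ?_
    simp only [hG'def]
    ring
  set u : ℕ → ℝ := fun k => (|L|/δ) * r k with hudef
  have hu : Summable u := hsum_r.mul_left _
  have hG'bound : ∀ (k : ℕ) (s : ℝ), ‖G' k s‖ ≤ u k := by
    intro k s
    rw [hG'def, hudef]
    simp only [Real.norm_eq_abs, abs_div, abs_mul]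
    rw [abs_of_pos (hr_pos k), abs_of_pos (hDpos k s)]
    rw [div_le_iff₀ (hDpos k s)]
    have h1 : |Real.sin (s*L)| ≤ 1 := Real.abs_sin_le_one _
    have h2 := hDge k s
    have h3 : 0 ≤ |L| := abs_nonneg _
    have h4 := (hr_pos k).le
    calc r k * |L| * |Real.sin (s*L)| ≤ r k * |L| * 1 := by gcongr
      _ = |L|/δ * r k * δ := by field_simp
      _ ≤ |L|/δ * r k * D k s := by gcongr
  have hG0 : Summable (fun k => G k 0) := by
    apply Summable.of_norm_bounded (g := fun k => (1/(1 - r 0)) * r k)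
    · exact hsum_r.mul_left _
    · intro k
      have hD0 : D k 0 = (1 - r k)^2 := by simp [hDdef]; ring
      have h1rk : 0 < 1 - r k := by linarith [hr_lt1 k]
      have h1r0 : 0 < 1 - r 0 := by linarith [hr_lt1 0]
      have hGk0 : G k 0 = Real.log (1 - r k) := by
        rw [hGdef]
        simp only [hD0]
        rw [show (1 - r k)^2 = (1-r k)^(2:ℕ) by norm_num, Real.log_pow]
        push_cast; ring
      rw [hGk0, Real.norm_eq_abs]
      have hneg : Real.log (1 - r k) ≤ 0 := Real.log_nonpos h1rk.le (by linarith [hr_pos k])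
      rw [abs_of_nonpos hneg]
      have := Real.log_le_sub_one_of_pos (show (0:ℝ) < (1 - r k)⁻¹ by positivity)
      rw [Real.log_inv] at this
      have hle : -Real.log (1 - r k) ≤ r k / (1 - r k) := by
        have : (1 - r k)⁻¹ - 1 = r k / (1 - r k) := by field_simp; ring
        linarith [Real.log_le_sub_one_of_pos (show (0:ℝ) < (1 - r k)⁻¹ by positivity),
          this]
      refine hle.trans ?_
      calc r k / (1 - r k) ≤ r k / (1 - r 0) :=
            div_le_div_of_nonneg_left (hr_pos k).le h1r0 (by linarith [hr_le k])
        _ = 1 / (1 - r 0) * r k := by ring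
  -- derivative of the series part
  have htsum : HasDerivAt (fun s => ∑' k, G k s) (∑' k, G' k t) t :=
    hasDerivAt_tsum hu hG hG'bound hG0 t
  -- derivative of the kappa part
  have h1t : HasDerivAt (fun s : ℝ => s * L) L t := by
    simpa using (hasDerivAt_id t).mul_const L
  have h2t : HasDerivAt (fun s : ℝ => Real.cos (s*L)) (-Real.sin (t*L) * L) t :=
    h1t.cos
  have hκ : HasDerivAt (fun s : ℝ => κ * (q ^ c * Real.cos (s*L)))
      ((κ * q ^ c) * (-Real.sin (t*L) * L)) t := by
    have := (h2t.const_mul (q ^ c)).const_mul κ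
    exact this.congr_deriv (by ring)
  -- function equality
  have hFeq : (fun s : ℝ => F (((c:ℝ):ℂ) + (s:ℂ) * Complex.I))
      = fun s : ℝ => (-f * L * c + κ * (q ^ c * Real.cos (s*L))) + ∑' k, G k s := by
    funext s
    show -f * L * (((c:ℝ):ℂ) + (s:ℂ) * Complex.I).re
        + κ * ((q:ℂ) ^ (((c:ℝ):ℂ) + (s:ℂ) * Complex.I)).re
        + ∑' k : ℕ, Real.log ‖1 - (q:ℂ) ^ ((((c:ℝ):ℂ) + (s:ℂ) * Complex.I) + (k:ℕ))‖ = _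
    have hre : (((c:ℝ):ℂ) + (s:ℂ) * Complex.I).re = c := by simp
    have hre2 : ((q:ℂ) ^ (((c:ℝ):ℂ) + (s:ℂ) * Complex.I)).re = q ^ c * Real.cos (s*L) := by
      rw [aux_cpow q c s hq0, aux_re]
    rw [hre, hre2]
    congr 1
    exact tsum_congr fun k => hlog k s
  -- summabilities for the target
  have hA_den : ∀ k : ℕ, 0 < 1 - q ^ (θ + (k:ℝ)) := by
    intro k
    have : q ^ (θ + (k:ℝ)) < 1 := Real.rpow_lt_one hq0.le hq1
      (by have := Nat.cast_nonneg (α := ℝ) k; linarith)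
    linarith
  have hA_bound : ∀ k : ℕ, 1 / (1 - q ^ (θ + (k:ℝ)))^2 ≤ 1 / (1 - q ^ θ)^2 := by
    intro k
    have hθ' : 0 < 1 - q ^ θ := by
      have : q ^ θ < 1 := Real.rpow_lt_one hq0.le hq1 hθ
      linarith
    have hmono : q ^ (θ + (k:ℝ)) ≤ q ^ θ := by
      apply Real.rpow_le_rpow_of_exponent_ge hq0 hq1.le
      have := Nat.cast_nonneg (α := ℝ) k; linarith
    have hθ2 : 0 < 1 - q ^ (θ + (k:ℝ)) := hA_den k
    apply one_div_le_one_div_of_le (pow_pos hθ' 2)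
    apply pow_le_pow_left₀ hθ'.le
    linarith
  have hθ' : 0 < 1 - q ^ θ := by
    have : q ^ θ < 1 := Real.rpow_lt_one hq0.le hq1 hθ
    linarith
  have hS1 : Summable (fun k : ℕ => r k * (1 / (1 - q ^ (θ + (k:ℝ)))^2)) := by
    apply Summable.of_nonneg_of_le
      (fun k => mul_nonneg (hr_pos k).le (by positivity)) ?_
      (hsum_r.mul_left (1/(1 - q ^ θ)^2))
    intro k
    rw [mul_comm]
    exact mul_le_mul_of_nonneg_right (hA_bound k) (hr_pos k).le
  have hS2 : Summable (fun k : ℕ => r k * (1 / D k t)) := by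
    apply Summable.of_nonneg_of_le
      (fun k => mul_nonneg (hr_pos k).le (one_div_pos.2 (hDpos k t)).le) ?_
      (hsum_r.mul_left (1/δ))
    intro k
    rw [mul_comm]
    exact mul_le_mul_of_nonneg_right
      (one_div_le_one_div_of_le hδ (hDge k t)) (hr_pos k).le
  have htsumG' : (∑' k, G' k t) = (L * Real.sin (t*L)) * ∑' k : ℕ, r k * (1 / D k t) := by
    rw [← tsum_mul_left]
    exact tsum_congr fun k => by simp only [hG'def]; ring
  have hκ_val : κ = ∑' k : ℕ, q ^ (k:ℕ) / (1 - q ^ (θ + (k:ℝ))) ^ 2 := rfl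
  have hκq : κ * q ^ c = ∑' k : ℕ, r k * (1 / (1 - q ^ (θ + (k:ℝ)))^2) := by
    rw [hκ_val, ← tsum_mul_right]
    exact tsum_congr fun k => by rw [hr_eq k]; ring
  have htarget : (∑' k : ℕ, q ^ (c + (k:ℝ)) *
        (1 / (1 - q ^ (θ + (k:ℝ)))^2
          - 1 / ‖1 - (q:ℂ) ^ (((c + (k:ℝ) : ℝ):ℂ) + (t:ℂ) * Complex.I)‖ ^ 2))
      = (∑' k : ℕ, r k * (1 / (1 - q ^ (θ + (k:ℝ)))^2))
        - ∑' k : ℕ, r k * (1 / D k t) := by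
    rw [← Summable.tsum_sub hS1 hS2]
    refine tsum_congr fun k => ?_
    rw [habs' k]
    show r k * _ = _
    ring
  have hd := ((hasDerivAt_const t (-f * L * c)).add hκ).add htsum
  rw [hFeq]
  refine hd.congr_deriv ?_
  rw [htarget, htsumG', hκq]
  ring
end

section
/- Let q ∈ (0,1). Then: (i) the function θ ↦ f(θ) = Σ_{k=0}^∞ q^{2θ+2k}/(1 − q^{θ+k})² is strictly decreasing on (0,∞); (ii) at θ₀ = log(1/2)/log q (i.e. when q^{θ₀} = 1/2) one has f(θ₀) − 1 = Σ_{k=1}^∞ q^{2k}/(2 − q^k)² ≥ 0; (iii) consequently, for every θ > 0, if f(θ) ≤ 1 then q^θ ≤ 1/2. -/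
open Real

private lemma g_mono {a b : ℝ} (ha : 0 ≤ a) (hb : b < 1) (hab : a < b) :
    a ^ 2 / (1 - a) ^ 2 < b ^ 2 / (1 - b) ^ 2 := by
  have h1a : 0 < 1 - a := by linarith
  have h1b : 0 < 1 - b := by linarith
  have key : a / (1 - a) < b / (1 - b) := by
    rw [div_lt_div_iff₀ h1a h1b]; nlinarith
  have h0 : 0 ≤ a / (1 - a) := div_nonneg ha h1a.le
  calc a ^ 2 / (1 - a) ^ 2 = (a / (1 - a)) ^ 2 := by rw [div_pow]
    _ < (b / (1 - b)) ^ 2 := by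
        apply pow_lt_pow_left₀ key h0; norm_num
    _ = b ^ 2 / (1 - b) ^ 2 := by rw [div_pow]

private lemma term_eq (q θ : ℝ) (hq : 0 < q) (k : ℕ) :
    q ^ (2 * θ + 2 * (k : ℝ)) / (1 - q ^ (θ + (k : ℝ))) ^ 2
      = (q ^ (θ + (k : ℝ))) ^ 2 / (1 - q ^ (θ + (k : ℝ))) ^ 2 := by
  congr 1
  have : 2 * θ + 2 * (k : ℝ) = (θ + k) * 2 := by ring
  rw [this, Real.rpow_mul hq.le, Real.rpow_two]

private lemma s_mem (q : ℝ) (hq : q ∈ Set.Ioo (0:ℝ) 1) {θ : ℝ} (hθ : 0 < θ) (k : ℕ) :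
    q ^ (θ + (k : ℝ)) ∈ Set.Ioo (0:ℝ) 1 := by
  constructor
  · exact Real.rpow_pos_of_pos hq.1 _
  · exact Real.rpow_lt_one hq.1.le hq.2 (by positivity)

private lemma summable_f (q : ℝ) (hq : q ∈ Set.Ioo (0:ℝ) 1) {θ : ℝ} (hθ : 0 < θ) :
    Summable (fun k : ℕ => q ^ (2 * θ + 2 * (k : ℝ)) / (1 - q ^ (θ + (k : ℝ))) ^ 2) := by
  have hq0 := hq.1
  have hθd : 0 < 1 - q ^ θ := by
    have := (s_mem q hq hθ 0); simp at this; linarith [this.2]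
  apply Summable.of_nonneg_of_le
    (g := fun k : ℕ => q ^ (2 * θ + 2 * (k : ℝ)) / (1 - q ^ (θ + (k : ℝ))) ^ 2)
    (f := fun k : ℕ => (q ^ (2 * θ) / (1 - q ^ θ) ^ 2) * (q ^ 2) ^ k)
  · intro k
    have hs := s_mem q hq hθ k
    exact div_nonneg (Real.rpow_pos_of_pos hq0 _).le (sq_nonneg _)
  · intro k
    have hs := s_mem q hq hθ k
    have hden : (1 - q ^ θ) ^ 2 ≤ (1 - q ^ (θ + (k : ℝ))) ^ 2 := by
      have h1 : q ^ (θ + (k : ℝ)) ≤ q ^ θ :=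
        Real.rpow_le_rpow_of_exponent_ge hq0 hq.2.le (le_add_of_nonneg_right (Nat.cast_nonneg k))
      have h2 : 0 < 1 - q ^ (θ + (k:ℝ)) := by linarith [hs.2]
      nlinarith
    have hnum : q ^ (2 * θ + 2 * (k : ℝ)) = q ^ (2 * θ) * (q ^ 2) ^ k := by
      rw [Real.rpow_add hq0]
      congr 1
      rw [show (2 : ℝ) * (k : ℝ) = ((2 * k : ℕ) : ℝ) by push_cast; ring,
        Real.rpow_natCast, pow_mul]
    calc q ^ (2 * θ + 2 * (k:ℝ)) / (1 - q ^ (θ + (k:ℝ))) ^ 2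
        ≤ q ^ (2 * θ + 2 * (k:ℝ)) / (1 - q ^ θ) ^ 2 :=
          div_le_div_of_nonneg_left (Real.rpow_pos_of_pos hq0 _).le (pow_pos hθd 2) hden
      _ = q ^ (2 * θ) / (1 - q ^ θ) ^ 2 * (q ^ 2) ^ k := by rw [hnum]; ring
  · exact (summable_geometric_of_lt_one (by positivity)
      (by nlinarith [hq.2, hq.1])).mul_left _

/-- For `q ∈ (0,1)`: (i) `θ ↦ f(θ) = Σ q^(2θ+2k)/(1−q^(θ+k))²`
is strictly decreasing on `(0,∞)`; (ii) at `θ₀ = log(1/2)/log q` (where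
`q^θ₀ = 1/2`) one has `f(θ₀) − 1 = Σ_{k=1}^∞ q^(2k)/(2−q^k)² ≥ 0`;
(iii) consequently for every `θ > 0`, `f(θ) ≤ 1` implies `q^θ ≤ 1/2`. -/
theorem stmt_17 (q : ℝ) (hq : q ∈ Set.Ioo (0 : ℝ) 1) :
    let f : ℝ → ℝ := fun θ => ∑' k : ℕ, q ^ (2 * θ + 2 * (k : ℝ)) / (1 - q ^ (θ + (k : ℝ))) ^ 2
    StrictAntiOn f (Set.Ioi 0) ∧
    (f (Real.log (1 / 2) / Real.log q) - 1
        = ∑' k : ℕ, q ^ (2 * (k + 1)) / (2 - q ^ (k + 1)) ^ 2 ∧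
      0 ≤ ∑' k : ℕ, q ^ (2 * (k + 1)) / (2 - q ^ (k + 1)) ^ 2) ∧
    ∀ θ : ℝ, 0 < θ → f θ ≤ 1 → q ^ θ ≤ 1 / 2 := by
  intro f
  have hq0 := hq.1
  have hq1 := hq.2
  -- (i) strict anti
  have hanti : StrictAntiOn f (Set.Ioi 0) := by
    intro θ₁ h1 θ₂ h2 h12
    simp only [Set.mem_Ioi] at h1 h2
    apply Summable.tsum_lt_tsum (i := 0)
    · intro k
      dsimp only
      rw [term_eq q θ₂ hq0 k, term_eq q θ₁ hq0 k]
      have hs2 := s_mem q hq h2 k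
      have hs1 := s_mem q hq h1 k
      have hle : q ^ (θ₂ + (k:ℝ)) ≤ q ^ (θ₁ + (k:ℝ)) :=
        Real.rpow_le_rpow_of_exponent_ge hq0 hq1.le (by linarith)
      rcases eq_or_lt_of_le hle with h | h
      · rw [h]
      · exact (g_mono hs2.1.le hs1.2 h).le
    · rw [term_eq q θ₂ hq0 0, term_eq q θ₁ hq0 0]
      exact g_mono (s_mem q hq h2 0).1.le (s_mem q hq h1 0).2
        (Real.rpow_lt_rpow_of_exponent_gt hq0 hq1 (by push_cast; linarith))
    · exact summable_f q hq h2
    · exact summable_f q hq h1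
  -- θ₀ facts
  set θ₀ : ℝ := Real.log (1 / 2) / Real.log q with hθ₀def
  have hlogq : Real.log q < 0 := Real.log_neg hq0 hq1
  have hlog2 : Real.log (1/2 : ℝ) < 0 := Real.log_neg (by norm_num) (by norm_num)
  have hθ₀pos : 0 < θ₀ := div_pos_of_neg_of_neg hlog2 hlogq
  have hqθ₀ : q ^ θ₀ = 1 / 2 := by
    rw [Real.rpow_def_of_pos hq0, hθ₀def, mul_div_assoc', mul_comm, mul_div_assoc,
      div_self hlogq.ne, mul_one, Real.exp_log (by norm_num)]
  -- summability of h k = q^(2k)/(2-q^k)^2  (nat powers)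
  have hden2 : ∀ k : ℕ, (1:ℝ) ≤ 2 - q ^ k := by
    intro k
    have : q ^ k ≤ 1 := pow_le_one₀ hq0.le hq1.le
    linarith
  have hsumh : Summable (fun k : ℕ => q ^ (2 * k) / (2 - q ^ k) ^ 2) := by
    apply Summable.of_nonneg_of_le (f := fun k : ℕ => (q ^ 2) ^ k)
    · intro k; have := hden2 k; positivity
    · intro k
      have h1 := hden2 k
      have h2 : (1:ℝ) ≤ (2 - q ^ k) ^ 2 := by nlinarith
      calc q ^ (2 * k) / (2 - q ^ k) ^ 2 ≤ q ^ (2 * k) / 1 :=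
            div_le_div_of_nonneg_left (by positivity) (by norm_num) h2
        _ = (q ^ 2) ^ k := by rw [div_one, pow_mul]
    · exact summable_geometric_of_lt_one (by positivity) (by nlinarith)
  -- f θ₀ = Σ q^(2k)/(2-q^k)^2
  have hfθ₀ : f θ₀ = ∑' k : ℕ, q ^ (2 * k) / (2 - q ^ k) ^ 2 := by
    apply tsum_congr
    intro k
    rw [term_eq q θ₀ hq0 k]
    have hsk : q ^ (θ₀ + (k:ℝ)) = q ^ k / 2 := by
      rw [Real.rpow_add hq0, hqθ₀, Real.rpow_natCast]; ring
    rw [hsk]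
    have hne : (2 - q ^ k) ≠ 0 := by have := hden2 k; linarith
    rw [pow_mul]
    field_simp
    ring
  have hsplit : f θ₀ - 1 = ∑' k : ℕ, q ^ (2 * (k + 1)) / (2 - q ^ (k + 1)) ^ 2 := by
    rw [hfθ₀, Summable.tsum_eq_zero_add hsumh]
    norm_num
  have hnn : 0 ≤ ∑' k : ℕ, q ^ (2 * (k + 1)) / (2 - q ^ (k + 1)) ^ 2 := by
    apply tsum_nonneg
    intro k
    have := hden2 (k + 1)
    positivity
  refine ⟨hanti, ⟨hsplit, hnn⟩, ?_⟩
  intro θ hθ hfθ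
  by_contra hgt
  push_neg at hgt
  have hθlt : θ < θ₀ := by
    by_contra hle
    push_neg at hle
    have : q ^ θ ≤ q ^ θ₀ := Real.rpow_le_rpow_of_exponent_ge hq0 hq1.le hle
    rw [hqθ₀] at this; linarith
  have := hanti (Set.mem_Ioi.mpr hθ) (Set.mem_Ioi.mpr hθ₀pos) hθlt
  have : (1:ℝ) ≤ f θ₀ := by linarith [hsplit ▸ hnn]
  linarith
end

section
/- Let q ∈ (0,1) and θ > 0, and set D(θ) = log q + log(1−q) + Ψ_q(θ). Define ϱ : (0,1) → ℝ by ϱ(α) = −1 + 2 log q / (log q + log(1−q) + Ψ_q(log α / log q)) and the steady state current j̃(α) = −α(1 + ϱ(α)). Then ϱ and j̃ are differentiable on (0,1) with ϱ' nonvanishing, the function h(α) := j̃'(α)/ϱ'(α) is differentiable at α = q^θ, and the KPZ coefficient λ = −d²j/dϱ², computed as λ = −h'(q^θ)/ϱ'(q^θ), equals q^θ (Ψ_q'(θ) log q − Ψ_q''(θ)) D(θ)³ / (2 Ψ_q'(θ)³). -/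
open Real Set Filter Topology

namespace Stmt19

noncomputable def F (q x : ℝ) : ℝ := ∑' k : ℕ, x * q ^ k / (1 - x * q ^ k)
noncomputable def F1 (q x : ℝ) : ℝ := ∑' k : ℕ, q ^ k / (1 - x * q ^ k) ^ 2
noncomputable def F2 (q x : ℝ) : ℝ := ∑' k : ℕ, 2 * (q ^ k) ^ 2 / (1 - x * q ^ k) ^ 3

variable {q x b : ℝ}

lemma den_pos (hq0 : 0 < q) (hq1 : q < 1) (hx0 : 0 ≤ x) (hx1 : x < 1) (k : ℕ) :
    0 < 1 - x * q ^ k := by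
  have h1 : q ^ k ≤ 1 := pow_le_one₀ hq0.le hq1.le
  nlinarith [pow_pos hq0 k]

lemma den_ge (hq0 : 0 < q) (hq1 : q < 1) (hx0 : 0 ≤ x) (hxb : x ≤ b) (k : ℕ) :
    1 - b ≤ 1 - x * q ^ k := by
  have h1 : q ^ k ≤ 1 := pow_le_one₀ hq0.le hq1.le
  nlinarith [pow_pos hq0 k]

lemma summable_geom_mul (hq0 : 0 < q) (hq1 : q < 1) (C : ℝ) :
    Summable fun k : ℕ => q ^ k * C :=
  (summable_geometric_of_lt_one hq0.le hq1).mul_right C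

lemma summable_F (hq0 : 0 < q) (hq1 : q < 1) (hx0 : 0 ≤ x) (hx1 : x < 1) :
    Summable fun k : ℕ => x * q ^ k / (1 - x * q ^ k) := by
  have h1x : (0:ℝ) < 1 - x := by linarith
  refine Summable.of_nonneg_of_le (fun k => ?_) (fun k => ?_) (summable_geom_mul hq0 hq1 (x / (1 - x)))
  · exact div_nonneg (by positivity) (den_pos hq0 hq1 hx0 hx1 k).le
  · have hd := den_ge hq0 hq1 hx0 le_rfl k
    calc x * q ^ k / (1 - x * q ^ k) ≤ x * q ^ k / (1 - x) := by
          apply div_le_div_of_nonneg_left (by positivity) h1x hd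
      _ = q ^ k * (x / (1 - x)) := by ring

lemma summable_F1 (hq0 : 0 < q) (hq1 : q < 1) (hx0 : 0 ≤ x) (hx1 : x < 1) :
    Summable fun k : ℕ => q ^ k / (1 - x * q ^ k) ^ 2 := by
  have h1x : (0:ℝ) < 1 - x := by linarith
  refine Summable.of_nonneg_of_le (fun k => ?_) (fun k => ?_) (summable_geom_mul hq0 hq1 (1 / (1 - x) ^ 2))
  · exact div_nonneg (by positivity) (by positivity)
  · have hd := den_ge hq0 hq1 hx0 le_rfl k
    have hdp := den_pos hq0 hq1 hx0 hx1 k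
    calc q ^ k / (1 - x * q ^ k) ^ 2 ≤ q ^ k / (1 - x) ^ 2 := by
          apply div_le_div_of_nonneg_left (by positivity) (by positivity)
          exact pow_le_pow_left₀ h1x.le hd 2
      _ = q ^ k * (1 / (1 - x) ^ 2) := by ring

lemma summable_F2 (hq0 : 0 < q) (hq1 : q < 1) (hx0 : 0 ≤ x) (hx1 : x < 1) :
    Summable fun k : ℕ => 2 * (q ^ k) ^ 2 / (1 - x * q ^ k) ^ 3 := by
  have h1x : (0:ℝ) < 1 - x := by linarith
  refine Summable.of_nonneg_of_le (fun k => ?_) (fun k => ?_) (summable_geom_mul hq0 hq1 (2 / (1 - x) ^ 3))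
  · exact div_nonneg (by positivity) (den_pos hq0 hq1 hx0 hx1 k |>.le |> fun h => by positivity)
  · have hd := den_ge hq0 hq1 hx0 le_rfl k
    have hdp := den_pos hq0 hq1 hx0 hx1 k
    have hq' : q ^ k ≤ 1 := pow_le_one₀ hq0.le hq1.le
    have hqp : 0 < q ^ k := pow_pos hq0 k
    calc 2 * (q ^ k) ^ 2 / (1 - x * q ^ k) ^ 3 ≤ 2 * q ^ k / (1 - x) ^ 3 := by
          apply div_le_div₀ (by positivity) (by nlinarith) (by positivity)
          exact pow_le_pow_left₀ h1x.le hd 3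
      _ = q ^ k * (2 / (1 - x) ^ 3) := by ring

lemma F_pos (hq0 : 0 < q) (hq1 : q < 1) (hx0 : 0 < x) (hx1 : x < 1) : 0 < F q x := by
  refine Summable.tsum_pos (summable_F hq0 hq1 hx0.le hx1) (fun k => ?_) 0 ?_
  · exact div_nonneg (by positivity) (den_pos hq0 hq1 hx0.le hx1 k).le
  · have := den_pos hq0 hq1 hx0.le hx1 0
    positivity

lemma F1_pos (hq0 : 0 < q) (hq1 : q < 1) (hx0 : 0 < x) (hx1 : x < 1) : 0 < F1 q x := by
  refine Summable.tsum_pos (summable_F1 hq0 hq1 hx0.le hx1) (fun k => ?_) 0 ?_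
  · exact div_nonneg (by positivity) (by positivity)
  · have := den_pos hq0 hq1 hx0.le hx1 0
    positivity

lemma hasDerivAt_term (c y : ℝ) (hne : 1 - y * c ≠ 0) :
    HasDerivAt (fun z => z * c / (1 - z * c)) (c / (1 - y * c) ^ 2) y := by
  have h1 : HasDerivAt (fun z : ℝ => z * c) (1 * c) y := (hasDerivAt_id y).mul_const c
  have h2 : HasDerivAt (fun z : ℝ => 1 - z * c) (0 - 1 * c) y :=
    (hasDerivAt_const y 1).sub h1
  have h3 := h1.fun_div h2 hne
  refine h3.congr_deriv ?_
  field_simp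
  ring

lemma hasDerivAt_term1 (c y : ℝ) (hne : 1 - y * c ≠ 0) :
    HasDerivAt (fun z => c / (1 - z * c) ^ 2) (2 * c ^ 2 / (1 - y * c) ^ 3) y := by
  have h2 : HasDerivAt (fun z : ℝ => 1 - z * c) (0 - 1 * c) y :=
    (hasDerivAt_const y 1).sub ((hasDerivAt_id y).mul_const c)
  have h3 : HasDerivAt (fun z : ℝ => (1 - z * c) ^ 2)
      ((2 : ℕ) * (1 - y * c) ^ (2 - 1) * (0 - 1 * c)) y := h2.pow 2
  have h4 := (hasDerivAt_const y c).fun_div h3 (pow_ne_zero 2 hne)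
  refine h4.congr_deriv ?_
  field_simp
  ring

lemma hasDerivAt_F (hq0 : 0 < q) (hq1 : q < 1) (hx : x ∈ Ioo (0:ℝ) 1) :
    HasDerivAt (F q) (F1 q x) x := by
  obtain ⟨hx0, hx1⟩ := hx
  set b := (x + 1) / 2 with hb
  have hxb : x < b := by rw [hb]; linarith
  have hb1 : b < 1 := by rw [hb]; linarith
  have hb0 : 0 < b := by rw [hb]; linarith
  have h1b : (0:ℝ) < 1 - b := by linarith
  have hxmem : x ∈ Ioo (0:ℝ) b := ⟨hx0, hxb⟩
  exact hasDerivAt_tsum_of_isPreconnected (u := fun k : ℕ => q ^ k * (1 / (1 - b) ^ 2))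
    (summable_geom_mul hq0 hq1 _) isOpen_Ioo (isPreconnected_Ioo)
    (fun k y hy => hasDerivAt_term (q ^ k) y (den_pos hq0 hq1 hy.1.le (hy.2.trans hb1) k).ne')
    (fun k y hy => by
      have hd := den_ge hq0 hq1 hy.1.le hy.2.le k
      have hdp := den_pos hq0 hq1 hy.1.le (hy.2.trans hb1) k
      rw [Real.norm_eq_abs, abs_of_nonneg (by positivity)]
      calc q ^ k / (1 - y * q ^ k) ^ 2 ≤ q ^ k / (1 - b) ^ 2 := by
            apply div_le_div_of_nonneg_left (by positivity) (by positivity)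
            exact pow_le_pow_left₀ h1b.le hd 2
        _ = q ^ k * (1 / (1 - b) ^ 2) := by ring)
    hxmem (summable_F hq0 hq1 hx0.le hx1) hxmem

lemma hasDerivAt_F1 (hq0 : 0 < q) (hq1 : q < 1) (hx : x ∈ Ioo (0:ℝ) 1) :
    HasDerivAt (F1 q) (F2 q x) x := by
  obtain ⟨hx0, hx1⟩ := hx
  set b := (x + 1) / 2 with hb
  have hxb : x < b := by rw [hb]; linarith
  have hb1 : b < 1 := by rw [hb]; linarith
  have hb0 : 0 < b := by rw [hb]; linarith
  have h1b : (0:ℝ) < 1 - b := by linarith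
  have hxmem : x ∈ Ioo (0:ℝ) b := ⟨hx0, hxb⟩
  exact hasDerivAt_tsum_of_isPreconnected (u := fun k : ℕ => q ^ k * (2 / (1 - b) ^ 3))
    (summable_geom_mul hq0 hq1 _) isOpen_Ioo (isPreconnected_Ioo)
    (fun k y hy => hasDerivAt_term1 (q ^ k) y (den_pos hq0 hq1 hy.1.le (hy.2.trans hb1) k).ne')
    (fun k y hy => by
      have hd := den_ge hq0 hq1 hy.1.le hy.2.le k
      have hdp := den_pos hq0 hq1 hy.1.le (hy.2.trans hb1) k
      have hq' : q ^ k ≤ 1 := pow_le_one₀ hq0.le hq1.le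
      have hqp : (0:ℝ) < q ^ k := pow_pos hq0 k
      rw [Real.norm_eq_abs, abs_of_nonneg (by positivity)]
      calc 2 * (q ^ k) ^ 2 / (1 - y * q ^ k) ^ 3 ≤ 2 * q ^ k / (1 - b) ^ 3 := by
            apply div_le_div₀ (by positivity) (by nlinarith) (by positivity)
            exact pow_le_pow_left₀ h1b.le hd 3
        _ = q ^ k * (2 / (1 - b) ^ 3) := by ring)
    hxmem (summable_F1 hq0 hq1 hx0.le hx1) hxmem

end Stmt19

open Real Set Filter Topology Stmt19

/-- For `q ∈ (0,1)`, `θ > 0`, with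
`ϱ(α) = −1 + 2 log q/(log q + log(1−q) + Ψ_q(log α/log q))` and the steady
state current `j̃(α) = −α(1+ϱ(α))`: both are differentiable on `(0,1)` with
`ϱ'` nonvanishing, `h(α) = j̃'(α)/ϱ'(α)` is differentiable at `α = q^θ`, and
the KPZ coefficient `λ = −d²j/dϱ² = −h'(q^θ)/ϱ'(q^θ)` equals
`q^θ (Ψ_q'(θ) log q − Ψ_q''(θ)) D(θ)³ / (2 Ψ_q'(θ)³)`. -/
theorem stmt_19 (q θ : ℝ) (hq : q ∈ Set.Ioo (0 : ℝ) 1) (hθ : 0 < θ) :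
    let Ψ : ℝ → ℝ := fun z =>
      -Real.log (1 - q) + Real.log q * ∑' k : ℕ, q ^ (z + (k : ℝ)) / (1 - q ^ (z + (k : ℝ)))
    let Ψ' : ℝ → ℝ := fun z =>
      (Real.log q) ^ 2 * ∑' k : ℕ, q ^ (z + (k : ℝ)) / (1 - q ^ (z + (k : ℝ))) ^ 2
    let Ψ'' : ℝ → ℝ := fun z =>
      (Real.log q) ^ 3 *
        ∑' k : ℕ, q ^ (z + (k : ℝ)) * (1 + q ^ (z + (k : ℝ))) / (1 - q ^ (z + (k : ℝ))) ^ 3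
    let D : ℝ := Real.log q + Real.log (1 - q) + Ψ θ
    let ϱ : ℝ → ℝ := fun α =>
      -1 + 2 * Real.log q /
        (Real.log q + Real.log (1 - q) + Ψ (Real.log α / Real.log q))
    let jt : ℝ → ℝ := fun α => -α * (1 + ϱ α)
    let h : ℝ → ℝ := fun α => deriv jt α / deriv ϱ α
    DifferentiableOn ℝ ϱ (Set.Ioo 0 1) ∧
    DifferentiableOn ℝ jt (Set.Ioo 0 1) ∧
    (∀ α ∈ Set.Ioo (0 : ℝ) 1, deriv ϱ α ≠ 0) ∧
    DifferentiableAt ℝ h (q ^ θ) ∧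
    -(deriv h (q ^ θ)) / deriv ϱ (q ^ θ)
      = q ^ θ * (Ψ' θ * Real.log q - Ψ'' θ) * D ^ 3 / (2 * Ψ' θ ^ 3) := by
  obtain ⟨hq0, hq1⟩ := hq
  intro Ψ Ψ' Ψ'' D ϱ jt h
  have hLneg : Real.log q < 0 := Real.log_neg hq0 hq1
  have hLne : Real.log q ≠ 0 := hLneg.ne
  set L := Real.log q with hLdef
  -- the point α₀ = q^θ
  have hα0 : (0:ℝ) < q ^ θ := Real.rpow_pos_of_pos hq0 θ
  have hα1 : q ^ θ < 1 := Real.rpow_lt_one hq0.le hq1 hθ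
  set α₀ := q ^ θ with hα₀def
  have hαmem : α₀ ∈ Ioo (0:ℝ) 1 := ⟨hα0, hα1⟩
  -- basic nonvanishing
  have hApos : ∀ x ∈ Ioo (0:ℝ) 1, (0:ℝ) < 1 + F q x := fun x hx => by
    have := F_pos hq0 hq1 hx.1 hx.2; linarith
  -- rewriting Ψ at logb
  have hrpow : ∀ x ∈ Ioo (0:ℝ) 1, ∀ k : ℕ,
      q ^ (Real.log x / Real.log q + (k:ℝ)) = x * q ^ k := by
    intro x hx k
    rw [Real.rpow_add hq0, Real.rpow_natCast, Real.log_div_log,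
      Real.rpow_logb hq0 hq1.ne hx.1]
  have hrpowθ : ∀ k : ℕ, q ^ (θ + (k:ℝ)) = α₀ * q ^ k := by
    intro k
    rw [Real.rpow_add hq0, Real.rpow_natCast, hα₀def]
  -- ϱ agrees with an explicit function of F on Ioo 0 1
  have hϱ_eq : ∀ x ∈ Ioo (0:ℝ) 1, ϱ x = -1 + 2 / (1 + F q x) := by
    intro x hx
    have hA := (hApos x hx).ne'
    have hΨx : Ψ (Real.log x / Real.log q) = -Real.log (1 - q) + L * F q x := by
      simp only [Ψ, F]
      congr 2
      exact tsum_congr fun k => by rw [hrpow x hx k]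
    simp only [ϱ, hΨx]
    rw [show L + Real.log (1 - q) + (-Real.log (1 - q) + L * F q x) = L * (1 + F q x) by ring]
    rw [← hLdef]
    field_simp
  have hjt_eq : ∀ x ∈ Ioo (0:ℝ) 1, jt x = -2 * x / (1 + F q x) := by
    intro x hx
    have hA := (hApos x hx).ne'
    simp only [jt, hϱ_eq x hx]
    ring
  -- derivative facts
  have hg : ∀ x ∈ Ioo (0:ℝ) 1,
      HasDerivAt (fun y => -1 + 2 / (1 + F q y)) (-2 * F1 q x / (1 + F q x) ^ 2) x := by
    intro x hx
    have h1 : HasDerivAt (fun y => 1 + F q y) (F1 q x) x :=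
      (hasDerivAt_F hq0 hq1 hx).const_add 1
    have h2 := ((hasDerivAt_const x (2:ℝ)).fun_div h1 (hApos x hx).ne').const_add (-1)
    refine h2.congr_deriv ?_
    ring
  have hjg : ∀ x ∈ Ioo (0:ℝ) 1,
      HasDerivAt (fun y => -2 * y / (1 + F q y))
        ((2 * x * F1 q x - 2 * (1 + F q x)) / (1 + F q x) ^ 2) x := by
    intro x hx
    have h1 : HasDerivAt (fun y : ℝ => -2 * y) (-2) x := by
      simpa using (hasDerivAt_id x).const_mul (-2 : ℝ)
    have hA : HasDerivAt (fun y => 1 + F q y) (F1 q x) x :=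
      (hasDerivAt_F hq0 hq1 hx).const_add 1
    have h2 := h1.fun_div hA (hApos x hx).ne'
    refine h2.congr_deriv ?_
    ring
  have hϱd : ∀ x ∈ Ioo (0:ℝ) 1, HasDerivAt ϱ (-2 * F1 q x / (1 + F q x) ^ 2) x := by
    intro x hx
    refine (hg x hx).congr_of_eventuallyEq ?_
    filter_upwards [Ioo_mem_nhds hx.1 hx.2] with y hy
    exact hϱ_eq y hy
  have hjtd : ∀ x ∈ Ioo (0:ℝ) 1,
      HasDerivAt jt ((2 * x * F1 q x - 2 * (1 + F q x)) / (1 + F q x) ^ 2) x := by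
    intro x hx
    refine (hjg x hx).congr_of_eventuallyEq ?_
    filter_upwards [Ioo_mem_nhds hx.1 hx.2] with y hy
    exact hjt_eq y hy
  have hϱ'ne : ∀ x ∈ Ioo (0:ℝ) 1, -2 * F1 q x / (1 + F q x) ^ 2 ≠ 0 := by
    intro x hx
    have hb := F1_pos hq0 hq1 hx.1 hx.2
    have hA := hApos x hx
    have : -2 * F1 q x / (1 + F q x) ^ 2 < 0 := by
      apply div_neg_of_neg_of_pos (by linarith) (by positivity)
    exact this.ne
  refine ⟨fun x hx => ((hϱd x hx).differentiableAt).differentiableWithinAt,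
    fun x hx => ((hjtd x hx).differentiableAt).differentiableWithinAt,
    fun x hx => by rw [(hϱd x hx).deriv]; exact hϱ'ne x hx, ?_, ?_⟩
  all_goals {
    -- second derivatives at α₀
    have ha : HasDerivAt (F q) (F1 q α₀) α₀ := hasDerivAt_F hq0 hq1 hαmem
    have hb : HasDerivAt (F1 q) (F2 q α₀) α₀ := hasDerivAt_F1 hq0 hq1 hαmem
    have hAne : (1 + F q α₀) ≠ 0 := (hApos α₀ hαmem).ne'
    have hA' : HasDerivAt (fun y => 1 + F q y) (F1 q α₀) α₀ := ha.const_add 1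
    have hA2 : HasDerivAt (fun y => (1 + F q y) ^ 2)
        ((2:ℕ) * (1 + F q α₀) ^ (2 - 1) * F1 q α₀) α₀ := hA'.pow 2
    have hN : HasDerivAt (fun y => 2 * y * F1 q y - 2 * (1 + F q y))
        ((2 * 1) * F1 q α₀ + (2 * α₀) * F2 q α₀ - 2 * F1 q α₀) α₀ := by
      exact (((hasDerivAt_id α₀).const_mul 2).mul hb).sub (hA'.const_mul 2)
    have hf₁ : HasDerivAt (fun y => (2 * y * F1 q y - 2 * (1 + F q y)) / (1 + F q y) ^ 2)
        ((2 * α₀ * F2 q α₀ * (1 + F q α₀) - 4 * α₀ * (F1 q α₀) ^ 2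
          + 4 * (1 + F q α₀) * F1 q α₀) / (1 + F q α₀) ^ 3) α₀ := by
      have := hN.fun_div hA2 (pow_ne_zero 2 hAne)
      refine this.congr_deriv ?_
      field_simp
      ring
    have hf₂ : HasDerivAt (fun y => -2 * F1 q y / (1 + F q y) ^ 2)
        ((-2 * F2 q α₀ * (1 + F q α₀) + 4 * (F1 q α₀) ^ 2) / (1 + F q α₀) ^ 3) α₀ := by
      have := (hb.const_mul (-2)).fun_div hA2 (pow_ne_zero 2 hAne)
      refine this.congr_deriv ?_
      field_simp
      ring
    have hG₀ne := hϱ'ne α₀ hαmem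
    have hr : HasDerivAt (fun y => ((2 * y * F1 q y - 2 * (1 + F q y)) / (1 + F q y) ^ 2)
        / (-2 * F1 q y / (1 + F q y) ^ 2))
        (((2 * α₀ * F2 q α₀ * (1 + F q α₀) - 4 * α₀ * (F1 q α₀) ^ 2
            + 4 * (1 + F q α₀) * F1 q α₀) / (1 + F q α₀) ^ 3
            * (-2 * F1 q α₀ / (1 + F q α₀) ^ 2)
          - (2 * α₀ * F1 q α₀ - 2 * (1 + F q α₀)) / (1 + F q α₀) ^ 2
            * ((-2 * F2 q α₀ * (1 + F q α₀) + 4 * (F1 q α₀) ^ 2) / (1 + F q α₀) ^ 3))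
          / (-2 * F1 q α₀ / (1 + F q α₀) ^ 2) ^ 2) α₀ := hf₁.div hf₂ hG₀ne
    have hhev : h =ᶠ[𝓝 α₀] fun y => ((2 * y * F1 q y - 2 * (1 + F q y)) / (1 + F q y) ^ 2)
        / (-2 * F1 q y / (1 + F q y) ^ 2) := by
      filter_upwards [Ioo_mem_nhds hα0 hα1] with y hy
      simp only [h, (hjtd y hy).deriv, (hϱd y hy).deriv]
    first
    | exact hr.differentiableAt.congr_of_eventuallyEq hhev
    | {
      -- final value computation
      have hderivh : deriv h α₀ = _ := hhev.deriv_eq.trans hr.deriv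
      rw [hderivh, (hϱd α₀ hαmem).deriv]
      -- rewrite Ψ' θ, Ψ'' θ, D
      have hbpos := F1_pos hq0 hq1 hα0 hα1
      have hΨ'θ : Ψ' θ = L ^ 2 * (α₀ * F1 q α₀) := by
        simp only [Ψ', F1]
        rw [show (∑' k : ℕ, q ^ (θ + (k:ℝ)) / (1 - q ^ (θ + (k:ℝ))) ^ 2)
            = ∑' k : ℕ, α₀ * (q ^ k / (1 - α₀ * q ^ k) ^ 2) from
          tsum_congr fun k => by rw [hrpowθ k]; ring, tsum_mul_left]
      have hΨ''θ : Ψ'' θ = L ^ 3 * (α₀ * F1 q α₀ + α₀ ^ 2 * F2 q α₀) := by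
        simp only [Ψ'', F1, F2]
        rw [show (∑' k : ℕ, q ^ (θ + (k:ℝ)) * (1 + q ^ (θ + (k:ℝ))) / (1 - q ^ (θ + (k:ℝ))) ^ 3)
            = ∑' k : ℕ, (α₀ * (q ^ k / (1 - α₀ * q ^ k) ^ 2)
              + α₀ ^ 2 * (2 * (q ^ k) ^ 2 / (1 - α₀ * q ^ k) ^ 3)) from
          tsum_congr fun k => by
            rw [hrpowθ k]
            have hd := (den_pos hq0 hq1 hα0.le hα1 k).ne'
            field_simp
            ring]
        rw [Summable.tsum_add ((summable_F1 hq0 hq1 hα0.le hα1).mul_left α₀)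
          ((summable_F2 hq0 hq1 hα0.le hα1).mul_left (α₀ ^ 2)), tsum_mul_left, tsum_mul_left]
      have hDθ : D = L * (1 + F q α₀) := by
        have hΨθ : Ψ θ = -Real.log (1 - q) + L * F q α₀ := by
          simp only [Ψ, F]
          congr 2
          exact tsum_congr fun k => by rw [hrpowθ k]
        simp only [D, hΨθ]
        ring
      rw [hΨ'θ, hΨ''θ, hDθ]
      have hα₀ne : α₀ ≠ 0 := hα0.ne'
      have hbne : F1 q α₀ ≠ 0 := hbpos.ne'
      field_simp
      ring
    }
  }
end
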